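/- arXiv:2601.11490 — 5 statements merged into one kernel-verified Lean document; each statement's English description precedes it below -/
import Mathlib

section
/- For every integer m ≥ 3, there exist finite sets A and B of integers and an increasing sequence of positive integers h_1 < h_2 < ⋯ < h_m such that |A| = |B|, and for all i ∈ {1,…,m}: |h_i A| < |h_i B| if i is odd, and |h_i A| > |h_i B| if i is even. -/
open Finset Pointwise

/-- The `h`-fold sumset of a finite set `A` of integers:
`hA = {a₁ + ⋯ + a_h : aᵢ ∈ A}`. -/
def finSumset (h : ℕ) (A : Finset ℤ) : Finset ℤ :=
  (Fintype.piFinset fun _ : Fin h => A).image fun f => ∑ i, f i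

/-! ### Basic properties of `finSumset` -/

lemma finSumset_zero (A : Finset ℤ) : finSumset 0 A = {0} := by
  ext x
  simp [finSumset, Fintype.mem_piFinset]

lemma finSumset_succ (h : ℕ) (A : Finset ℤ) : finSumset (h+1) A = A + finSumset h A := by
  ext x
  simp only [finSumset, mem_image, Fintype.mem_piFinset, Finset.mem_add]
  constructor
  · rintro ⟨f, hf, rfl⟩
    exact ⟨f 0, hf 0, ∑ i : Fin h, f i.succ, ⟨fun i => f i.succ, fun i => hf _, rfl⟩,
      (Fin.sum_univ_succ f).symm⟩
  · rintro ⟨a, ha, y, ⟨f, hf, rfl⟩, rfl⟩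
    refine ⟨Fin.cons a f, fun i => ?_, by rw [Fin.sum_univ_succ]; simp⟩
    refine Fin.cases ?_ ?_ i <;> simp [ha, hf]

lemma finSumset_one (A : Finset ℤ) : finSumset 1 A = A := by
  rw [finSumset_succ, finSumset_zero]
  exact add_zero A

lemma finSumset_add (h : ℕ) (S T : Finset ℤ) :
    finSumset h (S + T) = finSumset h S + finSumset h T := by
  induction h with
  | zero => simp [finSumset_zero]
  | succ n ih =>
      rw [finSumset_succ, finSumset_succ, finSumset_succ, ih]
      abel_nf

lemma finSumset_image_mul (h : ℕ) (N : ℤ) (A : Finset ℤ) :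
    finSumset h (A.image (N * ·)) = (finSumset h A).image (N * ·) := by
  induction h with
  | zero => simp [finSumset_zero]
  | succ n ih =>
      rw [finSumset_succ, finSumset_succ, ih]
      exact (Finset.image_add (AddMonoidHom.mulLeft N)).symm

lemma finSumset_singleton_zero (h : ℕ) : finSumset h ({0} : Finset ℤ) = {0} := by
  induction h with
  | zero => exact finSumset_zero _
  | succ n ih =>
      rw [finSumset_succ, ih, Finset.singleton_add_singleton]
      norm_num

lemma card_add_image (N : ℤ) (X Y : Finset ℤ) (hX : ∀ x ∈ X, 0 ≤ x ∧ x < N) :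
    (X + Y.image (N * ·)).card = X.card * Y.card := by
  have he : X + Y.image (N * ·) = (X ×ˢ Y).image (fun p => p.1 + N * p.2) := by
    ext z
    simp only [Finset.mem_add, mem_image, mem_product, Prod.exists]
    constructor
    · rintro ⟨x, hx, _, ⟨y, hy, rfl⟩, rfl⟩; exact ⟨x, y, ⟨hx, hy⟩, rfl⟩
    · rintro ⟨x, y, ⟨hx, hy⟩, rfl⟩; exact ⟨x, hx, N * y, ⟨y, hy, rfl⟩, rfl⟩
  rw [he, Finset.card_image_of_injOn, Finset.card_product]
  rintro ⟨x, y⟩ hxy ⟨x', y'⟩ hxy' heq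
  simp only [mem_coe, mem_product] at hxy hxy'
  obtain ⟨hx0, hxN⟩ := hX x hxy.1
  obtain ⟨hx0', hxN'⟩ := hX x' hxy'.1
  simp only at heq
  have hxx : x = x' := by
    have h1 : (x + N * y) % N = x := by
      rw [Int.add_mul_emod_self_left, Int.emod_eq_of_lt hx0 hxN]
    have h2 : (x' + N * y') % N = x' := by
      rw [Int.add_mul_emod_self_left, Int.emod_eq_of_lt hx0' hxN']
    rw [← h1, ← h2, heq]
  have hNy : N * y = N * y' := by omega
  have hyy : y = y' := mul_left_cancel₀ (by omega) hNy
  simp [hxx, hyy]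

/-! ### The blocks `{0, 1, g}` and their sumsets -/

def blk (g : ℕ) : Finset ℤ := {0, 1, (g : ℤ)}

def idxSet (h : ℕ) : Finset (ℕ × ℕ) :=
  (Finset.range (h+1) ×ˢ Finset.range (h+1)).filter fun p => p.1 + p.2 ≤ h

def D (g h : ℕ) : Finset ℤ := (idxSet h).image fun p => (p.1 : ℤ) + g * p.2

lemma mem_idxSet {h : ℕ} {p : ℕ × ℕ} : p ∈ idxSet h ↔ p.1 + p.2 ≤ h := by
  simp only [idxSet, mem_filter, mem_product, mem_range]
  omega

lemma card_blk (g : ℕ) (hg : 2 ≤ g) : (blk g).card = 3 := by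
  rw [blk, Finset.card_insert_of_notMem, Finset.card_insert_of_notMem,
    Finset.card_singleton]
  · simp only [Finset.mem_singleton]
    intro hcon
    have : (g : ℤ) ≥ 2 := by exact_mod_cast hg
    omega
  · simp only [Finset.mem_insert, Finset.mem_singleton]
    push_neg
    constructor
    · norm_num
    · intro hcon
      have : (g : ℤ) ≥ 2 := by exact_mod_cast hg
      omega

lemma finSumset_blk (g h : ℕ) : finSumset h (blk g) = D g h := by
  induction h with
  | zero =>
      rw [finSumset_zero]
      ext x
      simp only [D, mem_image, mem_singleton, mem_idxSet, Prod.exists]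
      constructor
      · rintro rfl; exact ⟨0, 0, by omega, by simp⟩
      · rintro ⟨i, j, hij, rfl⟩
        have : i = 0 ∧ j = 0 := by omega
        simp [this.1, this.2]
  | succ n ih =>
      rw [finSumset_succ, ih]
      ext x
      simp only [Finset.mem_add, D, mem_image, mem_idxSet, Prod.exists, blk,
        mem_insert, mem_singleton]
      constructor
      · rintro ⟨a, ha, _, ⟨i, j, hij, rfl⟩, rfl⟩
        rcases ha with rfl | rfl | rfl
        · exact ⟨i, j, by omega, by push_cast; ring⟩
        · exact ⟨i + 1, j, by omega, by push_cast; ring⟩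
        · exact ⟨i, j + 1, by omega, by push_cast; ring⟩
      · rintro ⟨i, j, hij, rfl⟩
        rcases Nat.eq_zero_or_pos i with rfl | hi
        · rcases Nat.eq_zero_or_pos j with rfl | hj
          · exact ⟨0, by simp, 0, ⟨0, 0, by omega, by simp⟩, by simp⟩
          · refine ⟨(g : ℤ), by simp, (0 : ℤ) + g * (j - 1 : ℕ), ⟨0, j - 1, by omega, rfl⟩, ?_⟩
            push_cast [hj]
            ring_nf
        · refine ⟨1, by simp, ((i - 1 : ℕ) : ℤ) + g * j, ⟨i - 1, j, by omega, rfl⟩, ?_⟩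
          push_cast [hi]
          ring

lemma card_idxSet (h : ℕ) : (idxSet h).card * 2 = (h+1) * (h+2) := by
  induction h with
  | zero => decide
  | succ n ih =>
      have hsplit : idxSet (n+1) = idxSet n ∪ (Finset.range (n+2)).image (fun i => (i, n+1-i)) := by
        ext ⟨i, j⟩
        simp only [mem_idxSet, Finset.mem_union, mem_image, mem_range]
        constructor
        · intro hle
          rcases Nat.lt_or_ge (i+j) (n+1) with hlt | hge
          · left; exact by omega
          · right
            refine ⟨i, by omega, ?_⟩
            have : j = n+1-i := by omega
            subst this
            rfl
        · rintro (hle | ⟨a, ha, hpe⟩)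
          · omega
          · simp only [Prod.mk.injEq] at hpe; omega
      have hdisj : Disjoint (idxSet n) ((Finset.range (n+2)).image (fun i => (i, n+1-i))) := by
        rw [Finset.disjoint_left]
        rintro ⟨i, j⟩ hij hmem
        simp only [mem_image, mem_range] at hmem
        obtain ⟨a, ha, hpe⟩ := hmem
        simp only [Prod.mk.injEq] at hpe
        rw [mem_idxSet] at hij
        omega
      have hcardim : ((Finset.range (n+2)).image (fun i => (i, n+1-i))).card = n + 2 := by
        rw [Finset.card_image_of_injective _
          (fun a b hab => by simpa using (Prod.mk.injEq _ _ _ _ ▸ hab).1), Finset.card_range]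
      rw [hsplit, Finset.card_union_of_disjoint hdisj, hcardim]
      ring_nf
      ring_nf at ih
      omega

lemma card_D_le_quad (g h : ℕ) : (D g h).card * 2 ≤ (h+1) * (h+2) := by
  calc (D g h).card * 2 ≤ (idxSet h).card * 2 :=
        Nat.mul_le_mul_right 2 (Finset.card_image_le)
    _ = (h+1) * (h+2) := card_idxSet h

lemma card_D_eq_quad (g h : ℕ) (hgh : h < g) : (D g h).card * 2 = (h+1) * (h+2) := by
  rw [D, Finset.card_image_of_injOn, card_idxSet]
  rintro ⟨i, j⟩ hij ⟨i', j'⟩ hij' heq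
  simp only [mem_coe, mem_idxSet] at hij hij'
  simp only at heq
  have hgpos : (0 : ℤ) < g := by exact_mod_cast Nat.pos_of_ne_zero (by omega)
  have hii : (i : ℤ) = i' := by
    have h1 : ((i : ℤ) + g * j) % g = i := by
      rw [Int.add_mul_emod_self_left, Int.emod_eq_of_lt (by positivity)
        (by exact_mod_cast by omega)]
    have h2 : ((i' : ℤ) + g * j') % g = i' := by
      rw [Int.add_mul_emod_self_left, Int.emod_eq_of_lt (by positivity)
        (by exact_mod_cast by omega)]
    rw [← h1, ← h2, heq]
  have hjj : (j : ℤ) = j' := by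
    have hmm : (g : ℤ) * j = g * j' := by omega
    exact mul_left_cancel₀ (ne_of_gt hgpos) hmm
  have hii' : i = i' := by exact_mod_cast hii
  have hjj' : j = j' := by exact_mod_cast hjj
  simp_all

lemma D_bounds {g h : ℕ} (hg : 1 ≤ g) : ∀ x ∈ D g h, 0 ≤ x ∧ x ≤ ((g * h : ℕ) : ℤ) := by
  intro x hx
  simp only [D, mem_image, mem_idxSet, Prod.exists] at hx
  obtain ⟨i, j, hij, rfl⟩ := hx
  refine ⟨by positivity, ?_⟩
  have h2 : i + g * j ≤ g * h := by nlinarith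
  calc (i : ℤ) + g * j = ((i + g * j : ℕ) : ℤ) := by push_cast; ring
    _ ≤ ((g * h : ℕ) : ℤ) := by exact_mod_cast h2

lemma card_D_le_lin (g h : ℕ) (hg : 1 ≤ g) : (D g h).card ≤ g * h + 1 := by
  have hsub : D g h ⊆ Finset.Icc (0 : ℤ) ((g * h : ℕ) : ℤ) := by
    intro x hx
    rw [Finset.mem_Icc]
    exact D_bounds hg x hx
  calc (D g h).card ≤ (Finset.Icc (0 : ℤ) ((g * h : ℕ) : ℤ)).card := Finset.card_le_card hsub
    _ = g * h + 1 := by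
        rw [Int.card_Icc]
        have he : (((g * h : ℕ) : ℤ) + 1 - 0) = ((g * h + 1 : ℕ) : ℤ) := by push_cast; ring
        rw [he, Int.toNat_natCast]

lemma card_D_ge (g h : ℕ) : h + 1 ≤ (D g h).card := by
  have hsub : (Finset.range (h+1)).image (fun i : ℕ => (i : ℤ)) ⊆ D g h := by
    intro x hx
    simp only [mem_image, mem_range] at hx
    obtain ⟨i, hi, rfl⟩ := hx
    simp only [D, mem_image, mem_idxSet, Prod.exists]
    exact ⟨i, 0, by omega, by simp⟩
  calc h + 1 = ((Finset.range (h+1)).image (fun i : ℕ => (i : ℤ))).card := by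
        rw [Finset.card_image_of_injective _ (fun a b hab => by exact_mod_cast hab),
          Finset.card_range]
    _ ≤ (D g h).card := Finset.card_le_card hsub

lemma blk_bounded (g h Nn : ℕ) (hg : 1 ≤ g) (hlt : g * h < Nn) :
    ∀ x ∈ finSumset h (blk g), 0 ≤ x ∧ x < (Nn : ℤ) := by
  intro x hx
  rw [finSumset_blk] at hx
  obtain ⟨h0, h1⟩ := D_bounds hg x hx
  exact ⟨h0, lt_of_le_of_lt h1 (by exact_mod_cast hlt)⟩

/-! ### Stacking blocks at different scales -/

def rep (N : ℤ) (S : Finset ℤ) : ℕ → Finset ℤ → Finset ℤ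
  | 0, X => X
  | n+1, X => S + (rep N S n X).image (N * ·)

def bigStack (N : ℤ) (gf : ℕ → ℕ) : ℕ → Finset ℤ
  | 0 => {0}
  | k+1 => rep N (blk (gf (k+1))) (3^(k+1)) (bigStack N gf k)

lemma card_finSumset_rep (N : ℤ) (S : Finset ℤ) (h n : ℕ) (X : Finset ℤ)
    (hS : ∀ x ∈ finSumset h S, 0 ≤ x ∧ x < N) :
    (finSumset h (rep N S n X)).card = (finSumset h S).card ^ n * (finSumset h X).card := by
  induction n with
  | zero => simp [rep]
  | succ n ih =>
      rw [rep, finSumset_add, finSumset_image_mul, card_add_image N _ _ hS, ih]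
      ring

lemma card_finSumset_bigStack (N : ℤ) (gf : ℕ → ℕ) (h k : ℕ)
    (hb : ∀ j, 1 ≤ j → j ≤ k → ∀ x ∈ finSumset h (blk (gf j)), 0 ≤ x ∧ x < N) :
    (finSumset h (bigStack N gf k)).card
      = ∏ j ∈ Finset.range k, (finSumset h (blk (gf (j+1)))).card ^ (3^(j+1)) := by
  induction k with
  | zero => simp [bigStack, finSumset_singleton_zero]
  | succ k ih =>
      rw [bigStack, card_finSumset_rep N _ h _ _ (hb (k+1) (by omega) le_rfl),
        ih (fun j h1 h2 => hb j h1 (by omega)), Finset.prod_range_succ]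
      ring

/-! ### The scale sequence -/

def Gs : ℕ → ℕ
  | 0 => 2
  | n+1 => 8 * (Gs n)^2 + 2

lemma Gs_ge_two (n : ℕ) : 2 ≤ Gs n := by
  cases n with
  | zero => simp [Gs]
  | succ k => show 2 ≤ 8 * (Gs k)^2 + 2; omega

lemma Gs_lt_succ (n : ℕ) : Gs n < Gs (n+1) := by
  have h := Gs_ge_two n
  show Gs n < 8 * (Gs n)^2 + 2
  nlinarith

lemma Gs_mono : StrictMono Gs := strictMono_nat_of_lt_succ Gs_lt_succ

lemma sum_pow3 (i : ℕ) (hi : 1 ≤ i) :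
    2 * (∑ j ∈ Finset.range (i-1), 3^(j+1)) + 3 = 3^i := by
  induction i with
  | zero => omega
  | succ k ih =>
      cases Nat.eq_or_lt_of_le hi with
      | inl h => simp [← h]
      | inr h =>
          have hk : 1 ≤ k := by omega
          have h1 := ih hk
          have hred : k + 1 - 1 = (k - 1) + 1 := by omega
          rw [hred, Finset.sum_range_succ]
          have h2 : 3^((k-1)+1) = 3^k := by congr 1; omega
          have h3 : 3^(k+1) = 3^k * 3 := by rw [pow_succ]
          omega

lemma key_ineq (h g c Q W : ℕ) (hQ : 2*Q = (h+1)*(h+2)) (hc1 : c ≤ g*h+1)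
    (hg8 : 8*g^2 < h+2) (hgpos : 1 ≤ g) :
    c^(2*W+3) * Q^W < Q^(2*W+3) * (h+1)^W := by
  have hQh : h + 1 ≤ Q := by nlinarith
  have hcg : c ≤ g*(h+1) := by nlinarith
  have h8c : 8*c^2 < (h+2)*(h+1)^2 := by nlinarith
  have hc2 : c^2 < Q*(h+1) := by nlinarith
  have hcQ : c < Q := by nlinarith
  have hQpos : 0 < Q := by omega
  calc c^(2*W+3) * Q^W = (c^2*Q)^W * c^3 := by ring
    _ ≤ ((Q*(h+1))*Q)^W * c^3 := by
        refine Nat.mul_le_mul_right _ (Nat.pow_le_pow_left ?_ W)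
        exact Nat.mul_le_mul_right Q hc2.le
    _ < ((Q*(h+1))*Q)^W * Q^3 := by
        exact mul_lt_mul_of_pos_left (Nat.pow_lt_pow_left hcQ (by norm_num)) (by positivity)
    _ = Q^(2*W+3) * (h+1)^W := by
        rw [show Q*(h+1)*Q = (Q*Q)*(h+1) by ring, mul_pow, pow_add, pow_mul, sq]
        ring

lemma head_cmp (h Q g i : ℕ) (hi : 1 ≤ i) (c d : ℕ → ℕ)
    (hQ2 : 2*Q = (h+1)*(h+2))
    (hcQ : ∀ j, 1 ≤ j → j < i → c j ≤ Q)
    (hd : ∀ j, 1 ≤ j → j < i → h+1 ≤ d j)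
    (hci : c i ≤ g*h+1) (hdi : d i = Q) (hg8 : 8*g^2 < h+2) (hgpos : 1 ≤ g) :
    ∏ j ∈ Finset.range i, c (j+1) ^ 3^(j+1) < ∏ j ∈ Finset.range i, d (j+1) ^ 3^(j+1) := by
  have h3i := sum_pow3 i hi
  set W := ∑ j ∈ Finset.range (i-1), 3^(j+1) with hW
  obtain ⟨i', rfl⟩ : ∃ i', i = i' + 1 := ⟨i-1, by omega⟩
  have hi' : i' + 1 - 1 = i' := by omega
  rw [hi'] at hW
  rw [Finset.prod_range_succ, Finset.prod_range_succ]
  have hPc : (∏ j ∈ Finset.range i', c (j+1) ^ 3^(j+1)) ≤ Q ^ W := by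
    rw [hW, ← Finset.prod_pow_eq_pow_sum]
    exact Finset.prod_le_prod' fun j hj =>
      Nat.pow_le_pow_left (hcQ (j+1) (by omega) (by simp only [Finset.mem_range] at hj; omega)) _
  have hPd : (h+1) ^ W ≤ ∏ j ∈ Finset.range i', d (j+1) ^ 3^(j+1) := by
    rw [hW, ← Finset.prod_pow_eq_pow_sum]
    exact Finset.prod_le_prod' fun j hj =>
      Nat.pow_le_pow_left (hd (j+1) (by omega) (by simp only [Finset.mem_range] at hj; omega)) _
  have h3e : 3^(i'+1) = 2*W + 3 := by omega
  calc (∏ j ∈ Finset.range i', c (j+1) ^ 3^(j+1)) * c (i'+1) ^ 3^(i'+1)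
      ≤ Q ^ W * c (i'+1) ^ 3^(i'+1) := Nat.mul_le_mul_right _ hPc
    _ = c (i'+1) ^ (2*W+3) * Q ^ W := by rw [h3e]; ring
    _ < Q ^ (2*W+3) * (h+1) ^ W := key_ineq h g _ Q W hQ2 hci hg8 hgpos
    _ ≤ Q ^ (2*W+3) * ∏ j ∈ Finset.range i', d (j+1) ^ 3^(j+1) :=
        Nat.mul_le_mul_left _ hPd
    _ = (∏ j ∈ Finset.range i', d (j+1) ^ 3^(j+1)) * d (i'+1) ^ 3^(i'+1) := by
        rw [hdi, h3e]; ring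

/-! ### The main comparison lemma -/

set_option maxHeartbeats 2000000 in
lemma main_cmp (m i : ℕ) (hi1 : 1 ≤ i) (him : i ≤ m)
    (gc gd : ℕ → ℕ)
    (hgc : ∀ j, 1 ≤ j → j ≤ m → 1 ≤ gc j ∧ gc j ≤ Gs m)
    (hgd : ∀ j, 1 ≤ j → j ≤ m → 1 ≤ gd j ∧ gd j ≤ Gs m)
    (hcap : gc i = Gs (i-1)) (hunc : gd i = Gs m)
    (htailc : ∀ j, i < j → j ≤ m → Gs i - 2 < gc j)
    (htaild : ∀ j, i < j → j ≤ m → Gs i - 2 < gd j) :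
    (finSumset (Gs i - 2) (bigStack ((((Gs m)^2 : ℕ)) : ℤ) gc m)).card
      < (finSumset (Gs i - 2) (bigStack ((((Gs m)^2 : ℕ)) : ℤ) gd m)).card := by
  set h := Gs i - 2 with hh
  have hGsi2 : 2 ≤ Gs i := Gs_ge_two i
  have hGsm2 : 2 ≤ Gs m := Gs_ge_two m
  have hhGsm : h + 2 = Gs i := by omega
  have hGsim : Gs i ≤ Gs m := Gs_mono.le_iff_le.mpr him
  have hhlt : h < Gs m := by omega
  -- boundedness
  have hbound : ∀ (gf : ℕ → ℕ), (∀ j, 1 ≤ j → j ≤ m → 1 ≤ gf j ∧ gf j ≤ Gs m) →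
      ∀ j, 1 ≤ j → j ≤ m → ∀ x ∈ finSumset h (blk (gf j)), 0 ≤ x ∧ x < (((Gs m)^2 : ℕ) : ℤ) := by
    intro gf hgf j hj1 hjm
    apply blk_bounded _ _ _ (hgf j hj1 hjm).1
    calc gf j * h ≤ Gs m * h := Nat.mul_le_mul_right h (hgf j hj1 hjm).2
      _ < Gs m * Gs m := by
          have hpos : 0 < Gs m := by omega
          exact Nat.mul_lt_mul_of_le_of_lt le_rfl hhlt hpos
      _ = (Gs m)^2 := (sq (Gs m)).symm
  rw [card_finSumset_bigStack _ gc h m (hbound gc hgc),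
    card_finSumset_bigStack _ gd h m (hbound gd hgd)]
  set Q := (finSumset h (blk (Gs m))).card with hQdef
  have hQ2 : 2 * Q = (h+1) * (h+2) := by
    rw [hQdef, finSumset_blk]
    have := card_D_eq_quad (Gs m) h hhlt
    omega
  have hGssucc : Gs i = 8 * (Gs (i-1))^2 + 2 := by
    conv_lhs => rw [show i = (i-1)+1 by omega]
    simp [Gs]
  have hg8 : 8 * (Gs (i-1))^2 < h + 2 := by omega
  have hgpos : 1 ≤ Gs (i-1) := by have := Gs_ge_two (i-1); omega
  obtain ⟨t, rfl⟩ : ∃ t, m = i + t := ⟨m - i, by omega⟩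
  rw [Finset.prod_range_add, Finset.prod_range_add]
  have htaileq : (∏ x ∈ Finset.range t,
        (finSumset h (blk (gc (i + x + 1)))).card ^ 3^(i+x+1))
      = ∏ x ∈ Finset.range t,
        (finSumset h (blk (gd (i + x + 1)))).card ^ 3^(i+x+1) := by
    apply Finset.prod_congr rfl
    intro x hx
    simp only [Finset.mem_range] at hx
    have hj1 : i < i + x + 1 := by omega
    have hj2 : i + x + 1 ≤ i + t := by omega
    have hc := card_D_eq_quad (gc (i+x+1)) h (htailc _ hj1 hj2)
    have hd := card_D_eq_quad (gd (i+x+1)) h (htaild _ hj1 hj2)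
    rw [finSumset_blk, finSumset_blk]
    congr 1
    omega
  have htailpos : 0 < ∏ x ∈ Finset.range t,
      (finSumset h (blk (gd (i + x + 1)))).card ^ 3^(i+x+1) := by
    apply Finset.prod_pos
    intro x hx
    apply pow_pos
    rw [finSumset_blk]
    have := card_D_ge (gd (i+x+1)) h
    omega
  rw [htaileq]
  apply mul_lt_mul_of_pos_right _ htailpos
  apply head_cmp h Q (Gs (i-1)) i hi1 (fun j => (finSumset h (blk (gc j))).card)
    (fun j => (finSumset h (blk (gd j))).card) hQ2 ?_ ?_ ?_ ?_ hg8 hgpos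
  · intro j hj1 hji
    show (finSumset h (blk (gc j))).card ≤ Q
    rw [finSumset_blk]
    have := card_D_le_quad (gc j) h
    omega
  · intro j hj1 hji
    show h + 1 ≤ (finSumset h (blk (gd j))).card
    rw [finSumset_blk]
    exact card_D_ge (gd j) h
  · show (finSumset h (blk (gc i))).card ≤ Gs (i-1) * h + 1
    rw [hcap, finSumset_blk]
    exact card_D_le_lin (Gs (i-1)) h hgpos
  · show (finSumset h (blk (gd i))).card = Q
    rw [hunc]

/-! ### The two families of scales -/

def gfA (m j : ℕ) : ℕ := if Odd j then Gs (j-1) else Gs m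
def gfB (m j : ℕ) : ℕ := if Odd j then Gs m else Gs (j-1)

lemma gfA_two (m j : ℕ) : 2 ≤ gfA m j := by
  rw [gfA]; split
  · exact Gs_ge_two _
  · exact Gs_ge_two _

lemma gfB_two (m j : ℕ) : 2 ≤ gfB m j := by
  rw [gfB]; split
  · exact Gs_ge_two _
  · exact Gs_ge_two _

lemma gfA_range (m : ℕ) : ∀ j, 1 ≤ j → j ≤ m → 1 ≤ gfA m j ∧ gfA m j ≤ Gs m := by
  intro j h1 h2
  rw [gfA]
  split
  · exact ⟨by have := Gs_ge_two (j-1); omega, Gs_mono.le_iff_le.mpr (by omega)⟩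
  · exact ⟨by have := Gs_ge_two m; omega, le_rfl⟩

lemma gfB_range (m : ℕ) : ∀ j, 1 ≤ j → j ≤ m → 1 ≤ gfB m j ∧ gfB m j ≤ Gs m := by
  intro j h1 h2
  rw [gfB]
  split
  · exact ⟨by have := Gs_ge_two m; omega, le_rfl⟩
  · exact ⟨by have := Gs_ge_two (j-1); omega, Gs_mono.le_iff_le.mpr (by omega)⟩

lemma gfA_tail (m i : ℕ) (him : i ≤ m) : ∀ j, i < j → j ≤ m → Gs i - 2 < gfA m j := by
  intro j hj1 hj2
  have h1 : Gs i ≤ Gs (j-1) := Gs_mono.le_iff_le.mpr (by omega)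
  have h2 : Gs i ≤ Gs m := Gs_mono.le_iff_le.mpr him
  have h3 := Gs_ge_two i
  rw [gfA]; split <;> omega

lemma gfB_tail (m i : ℕ) (him : i ≤ m) : ∀ j, i < j → j ≤ m → Gs i - 2 < gfB m j := by
  intro j hj1 hj2
  have h1 : Gs i ≤ Gs (j-1) := Gs_mono.le_iff_le.mpr (by omega)
  have h2 : Gs i ≤ Gs m := Gs_mono.le_iff_le.mpr him
  have h3 := Gs_ge_two i
  rw [gfB]; split <;> omega

set_option maxHeartbeats 2000000 in
/-- For every integer `m ≥ 3`, there exist finite sets `A` and `B` of integers and an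
increasing sequence of positive integers `h 1 < h 2 < ⋯ < h m` such that `|A| = |B|`,
and for all `i ∈ {1,…,m}`: `|hᵢA| < |hᵢB|` if `i` is odd, and `|hᵢA| > |hᵢB|` if `i`
is even. -/
theorem peringuey_deRoton (m : ℕ) (hm : 3 ≤ m) :
    ∃ (A B : Finset ℤ) (h : ℕ → ℕ),
      (∀ i, 1 ≤ i → i ≤ m → 0 < h i) ∧
      (∀ i, 1 ≤ i → i < m → h i < h (i + 1)) ∧
      A.card = B.card ∧
      (∀ i, 1 ≤ i → i ≤ m →
        (Odd i → (finSumset (h i) A).card < (finSumset (h i) B).card) ∧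
        (Even i → (finSumset (h i) B).card < (finSumset (h i) A).card)) := by
  have hGsm2 : 2 ≤ Gs m := Gs_ge_two m
  refine ⟨bigStack (((Gs m)^2 : ℕ) : ℤ) (gfA m) m, bigStack (((Gs m)^2 : ℕ) : ℤ) (gfB m) m,
    fun i => Gs i - 2, ?_, ?_, ?_, ?_⟩
  · intro i h1 h2
    show 0 < Gs i - 2
    have h34 : Gs 1 ≤ Gs i := Gs_mono.le_iff_le.mpr h1
    have hGs1 : Gs 1 = 34 := by simp [Gs]
    omega
  · intro i h1 h2
    show Gs i - 2 < Gs (i+1) - 2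
    have := Gs_lt_succ i
    have := Gs_ge_two i
    omega
  · have hb : ∀ (gf : ℕ → ℕ), (∀ j, 1 ≤ j → j ≤ m → 1 ≤ gf j ∧ gf j ≤ Gs m) →
        ∀ j, 1 ≤ j → j ≤ m → ∀ x ∈ finSumset 1 (blk (gf j)), 0 ≤ x ∧ x < (((Gs m)^2 : ℕ) : ℤ) := by
      intro gf hgf j h1 h2
      apply blk_bounded _ _ _ (hgf j h1 h2).1
      have := (hgf j h1 h2).2
      nlinarith
    have eA := card_finSumset_bigStack (((Gs m)^2 : ℕ) : ℤ) (gfA m) 1 m (hb (gfA m) (gfA_range m))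
    have eB := card_finSumset_bigStack (((Gs m)^2 : ℕ) : ℤ) (gfB m) 1 m (hb (gfB m) (gfB_range m))
    rw [finSumset_one] at eA eB
    rw [eA, eB]
    apply Finset.prod_congr rfl
    intro j hj
    simp only [Finset.mem_range] at hj
    congr 1
    rw [finSumset_one, finSumset_one, card_blk _ (gfA_two m (j+1)), card_blk _ (gfB_two m (j+1))]
  · intro i h1 h2
    constructor
    · intro hodd
      have := main_cmp m i h1 h2 (gfA m) (gfB m) (gfA_range m) (gfB_range m)
        (by rw [gfA, if_pos hodd]) (by rw [gfB, if_pos hodd])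
        (gfA_tail m i h2) (gfB_tail m i h2)
      simpa using this
    · intro heven
      have hnodd : ¬ Odd i := (Nat.not_odd_iff_even).mpr heven
      have := main_cmp m i h1 h2 (gfB m) (gfA m) (gfB_range m) (gfA_range m)
        (by rw [gfB, if_neg hnodd]) (by rw [gfA, if_neg hnodd])
        (gfB_tail m i h2) (gfA_tail m i h2)
      simpa using this
end

section
/- For all integers n ≥ 2 and H ≥ 2, and for any integers m_{i,h} given for all i = 1,…,n−1 and h = 1,…,H, there exist finite sets of integers A_1,…,A_n such that |hA_i| − |hA_{i+1}| = m_{i,h} for all i = 1,…,n−1 and h = 1,…,H. -/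
open Finset Pointwise

namespace FKZ

variable (Hn xm : ℕ) (x : ℕ → ℕ)

def muZ : ℤ := Hn * xm + 1
def KZ : ℤ := (2 * Hn + 2) * muZ Hn xm
def NZ : ℤ := 3 * KZ Hn xm + 3
def LZ : ℤ := NZ Hn xm - KZ Hn xm - 1
def eF (t i : ℕ) : ℤ := ((t : ℤ) - 1) * xm + i
def genF (t i : ℕ) : ℤ := KZ Hn xm - ((t : ℤ) - 1) * muZ Hn xm - eF xm t i
def gens : Finset ℤ :=
  ((Icc 1 Hn).sigma fun t => Icc 1 (x t)).image fun p => genF Hn xm p.1 p.2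
def Cset : Finset ℤ := insert 0 (insert (muZ Hn xm) (gens Hn xm x))
def dialP (h : ℕ) : Finset ((_ : ℕ) × ℕ × ℕ) :=
  (Icc 1 Hn).sigma fun t => (Icc 1 (x t)) ×ˢ (range (min h t))
def Eset (h : ℕ) : Finset ℤ :=
  insert 0 (((Icc 1 h).image fun a : ℕ => (a : ℤ) * muZ Hn xm) ∪
    (dialP Hn x h).image fun p => genF Hn xm p.1 p.2.1 + (p.2.2 : ℤ) * muZ Hn xm)
noncomputable def Aset : Finset ℤ := Icc 0 (LZ Hn xm) ∪ (Cset Hn xm x).image fun c => NZ Hn xm - c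
noncomputable def Rset (h : ℕ) : Finset ℤ :=
  Icc 0 ((h : ℤ) * NZ Hn xm - KZ Hn xm - 1) ∪
    (Eset Hn xm x h).image fun v => (h : ℤ) * NZ Hn xm - v

lemma mu_pos : 0 < muZ Hn xm := by unfold muZ; positivity

lemma K_pos : 0 < KZ Hn xm := by unfold KZ muZ; positivity

lemma mem_gens {z : ℤ} :
    z ∈ gens Hn xm x ↔ ∃ t i, (1 ≤ t ∧ t ≤ Hn) ∧ (1 ≤ i ∧ i ≤ x t) ∧ z = genF Hn xm t i := by
  simp only [gens, Finset.mem_image, Finset.mem_sigma, Finset.mem_Icc]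
  constructor
  · rintro ⟨⟨t, i⟩, ⟨ht, hi⟩, rfl⟩
    exact ⟨t, i, ht, hi, rfl⟩
  · rintro ⟨t, i, ht, hi, rfl⟩
    exact ⟨⟨t, i⟩, ⟨ht, hi⟩, rfl⟩

lemma mem_Cset {z : ℤ} :
    z ∈ Cset Hn xm x ↔ z = 0 ∨ z = muZ Hn xm ∨
      ∃ t i, (1 ≤ t ∧ t ≤ Hn) ∧ (1 ≤ i ∧ i ≤ x t) ∧ z = genF Hn xm t i := by
  simp only [Cset, Finset.mem_insert, mem_gens]

lemma mem_Eset {h : ℕ} {z : ℤ} :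
    z ∈ Eset Hn xm x h ↔ z = 0 ∨
      (∃ a, (1 ≤ a ∧ a ≤ h) ∧ z = (a : ℤ) * muZ Hn xm) ∨
      (∃ t i a, (1 ≤ t ∧ t ≤ Hn) ∧ (1 ≤ i ∧ i ≤ x t) ∧ a < min h t ∧
        z = genF Hn xm t i + (a : ℤ) * muZ Hn xm) := by
  simp only [Eset, Finset.mem_insert, Finset.mem_union, Finset.mem_image, dialP,
    Finset.mem_sigma, Finset.mem_product, Finset.mem_Icc, Finset.mem_range]
  constructor
  · rintro (rfl | ⟨a, ha, rfl⟩ | ⟨⟨t, i, a⟩, ⟨ht, hi, ha⟩, rfl⟩)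
    · exact Or.inl rfl
    · exact Or.inr (Or.inl ⟨a, ha, rfl⟩)
    · exact Or.inr (Or.inr ⟨t, i, a, ht, hi, ha, rfl⟩)
  · rintro (rfl | ⟨a, ha, rfl⟩ | ⟨t, i, a, ht, hi, ha, rfl⟩)
    · exact Or.inl rfl
    · exact Or.inr (Or.inl ⟨a, ha, rfl⟩)
    · exact Or.inr (Or.inr ⟨⟨t, i, a⟩, ⟨ht, hi, ha⟩, rfl⟩)

lemma mem_Aset {z : ℤ} :
    z ∈ Aset Hn xm x ↔ (0 ≤ z ∧ z ≤ LZ Hn xm) ∨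
      ∃ c ∈ Cset Hn xm x, z = NZ Hn xm - c := by
  simp only [Aset, Finset.mem_union, Finset.mem_Icc, Finset.mem_image]
  constructor
  · rintro (h | ⟨c, hc, rfl⟩)
    · exact Or.inl h
    · exact Or.inr ⟨c, hc, rfl⟩
  · rintro (h | ⟨c, hc, rfl⟩)
    · exact Or.inl h
    · exact Or.inr ⟨c, hc, rfl⟩

lemma mem_Rset {h : ℕ} {z : ℤ} :
    z ∈ Rset Hn xm x h ↔
      (0 ≤ z ∧ z ≤ (h : ℤ) * NZ Hn xm - KZ Hn xm - 1) ∨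
      ∃ v ∈ Eset Hn xm x h, z = (h : ℤ) * NZ Hn xm - v := by
  simp only [Rset, Finset.mem_union, Finset.mem_Icc, Finset.mem_image]
  constructor
  · rintro (h | ⟨v, hv, rfl⟩)
    · exact Or.inl h
    · exact Or.inr ⟨v, hv, rfl⟩
  · rintro (h | ⟨v, hv, rfl⟩)
    · exact Or.inl h
    · exact Or.inr ⟨v, hv, rfl⟩



section Bounds

lemma mu_nonneg : 0 ≤ muZ Hn xm := (mu_pos Hn xm).le

lemma eF_ge {t i : ℕ} (ht : 1 ≤ t) (hi : 1 ≤ i) : 1 ≤ eF xm t i := by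
  have h1 : (0:ℤ) ≤ ((t:ℤ) - 1) := by
    have : (1:ℤ) ≤ (t:ℤ) := by exact_mod_cast ht
    linarith
  have h2 : (0:ℤ) ≤ (xm : ℤ) := by positivity
  have := mul_nonneg h1 h2
  have h3 : (1:ℤ) ≤ (i:ℤ) := by exact_mod_cast hi
  unfold eF; linarith

lemma eF_le {t i : ℕ} (ht2 : t ≤ Hn) (hi2 : i ≤ xm) : eF xm t i ≤ muZ Hn xm - 1 := by
  have h1 : ((t:ℤ) - 1) ≤ ((Hn:ℤ) - 1) := by
    have : (t:ℤ) ≤ (Hn:ℤ) := by exact_mod_cast ht2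
    linarith
  have h2 : (0:ℤ) ≤ (xm : ℤ) := by positivity
  have hm := mul_le_mul_of_nonneg_right h1 h2
  have h3 : (i:ℤ) ≤ (xm:ℤ) := by exact_mod_cast hi2
  unfold eF muZ; linarith

lemma tmu_nonneg {t : ℕ} (ht : 1 ≤ t) : 0 ≤ ((t:ℤ) - 1) * muZ Hn xm := by
  apply mul_nonneg _ (mu_nonneg Hn xm)
  have : (1:ℤ) ≤ (t:ℤ) := by exact_mod_cast ht
  linarith

lemma tmu_le {t : ℕ} (ht2 : t ≤ Hn) : ((t:ℤ) - 1) * muZ Hn xm ≤ ((Hn:ℤ) - 1) * muZ Hn xm := by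
  apply mul_le_mul_of_nonneg_right _ (mu_nonneg Hn xm)
  have : (t:ℤ) ≤ (Hn:ℤ) := by exact_mod_cast ht2
  linarith

lemma K_eq : KZ Hn xm = (2 * (Hn:ℤ) + 2) * muZ Hn xm := by
  unfold KZ; push_cast; ring

lemma genF_le {t i : ℕ} (ht : 1 ≤ t) (hi : 1 ≤ i) : genF Hn xm t i ≤ KZ Hn xm - 1 := by
  have := eF_ge xm ht hi
  have := tmu_nonneg Hn xm ht
  unfold genF; linarith

lemma genF_ge {t i : ℕ} (ht2 : t ≤ Hn) (hi2 : i ≤ xm) :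
    ((Hn:ℤ) + 2) * muZ Hn xm + 1 ≤ genF Hn xm t i := by
  have h1 := eF_le Hn xm ht2 hi2
  have h2 := tmu_le Hn xm ht2
  have h3 := K_eq Hn xm
  unfold genF
  nlinarith [mu_pos Hn xm]

lemma amu_le {a : ℕ} (ha : a ≤ Hn) : (a:ℤ) * muZ Hn xm ≤ ((Hn:ℤ)) * muZ Hn xm := by
  apply mul_le_mul_of_nonneg_right _ (mu_nonneg Hn xm)
  exact_mod_cast ha

lemma amu_nonneg (a : ℕ) : 0 ≤ (a:ℤ) * muZ Hn xm := by
  apply mul_nonneg _ (mu_nonneg Hn xm); positivity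

/-- If `genF t i + a·μ ≤ K` then `a + 1 ≤ t`. -/
lemma key1 {t i a : ℕ} (ht : 1 ≤ t) (ht2 : t ≤ Hn) (hi : 1 ≤ i) (hi2 : i ≤ xm)
    (h : genF Hn xm t i + (a:ℤ) * muZ Hn xm ≤ KZ Hn xm) : a + 1 ≤ t := by
  by_contra hc
  have hta : (t:ℤ) ≤ (a:ℤ) := by exact_mod_cast (by omega : t ≤ a)
  have h4 : (t:ℤ) * muZ Hn xm ≤ (a:ℤ) * muZ Hn xm :=
    mul_le_mul_of_nonneg_right hta (mu_nonneg Hn xm)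
  have h1 := eF_le Hn xm ht2 hi2
  unfold genF at h
  nlinarith [mu_pos Hn xm]

/-- If `a + 1 ≤ t` then `genF t i + a·μ ≤ K - 1`. -/
lemma key2 {t i a : ℕ} (ht : 1 ≤ t) (hi : 1 ≤ i) (hat : a + 1 ≤ t) :
    genF Hn xm t i + (a:ℤ) * muZ Hn xm ≤ KZ Hn xm - 1 := by
  have hta : (a:ℤ) ≤ (t:ℤ) - 1 := by
    have : (a:ℤ) + 1 ≤ (t:ℤ) := by exact_mod_cast hat
    linarith
  have h4 : (a:ℤ) * muZ Hn xm ≤ ((t:ℤ) - 1) * muZ Hn xm :=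
    mul_le_mul_of_nonneg_right hta (mu_nonneg Hn xm)
  have := eF_ge xm ht hi
  unfold genF; linarith

lemma Cset_nonneg {c : ℤ} (hc : c ∈ Cset Hn xm x) (hx : ∀ t, x t ≤ xm) : 0 ≤ c := by
  rcases (mem_Cset Hn xm x).mp hc with rfl | rfl | ⟨t, i, ht, hi, rfl⟩
  · rfl
  · exact mu_nonneg Hn xm
  · have := genF_ge Hn xm ht.2 (le_trans hi.2 (hx t))
    nlinarith [mu_pos Hn xm]

lemma Cset_le_K {c : ℤ} (hc : c ∈ Cset Hn xm x) : c ≤ KZ Hn xm := by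
  rcases (mem_Cset Hn xm x).mp hc with rfl | rfl | ⟨t, i, ht, hi, rfl⟩
  · exact (K_pos Hn xm).le
  · have := K_eq Hn xm
    nlinarith [mu_pos Hn xm]
  · have := genF_le Hn xm ht.1 hi.1
    linarith

lemma Eset_nonneg {h : ℕ} {v : ℤ} (hv : v ∈ Eset Hn xm x h) (hx : ∀ t, x t ≤ xm) : 0 ≤ v := by
  rcases (mem_Eset Hn xm x).mp hv with rfl | ⟨a, _, rfl⟩ | ⟨t, i, a, ht, hi, _, rfl⟩
  · rfl
  · exact amu_nonneg Hn xm a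
  · have := genF_ge Hn xm ht.2 (le_trans hi.2 (hx t))
    have := amu_nonneg Hn xm a
    nlinarith [mu_pos Hn xm]

lemma Eset_le_K {h : ℕ} {v : ℤ} (hv : v ∈ Eset Hn xm x h) (hh : h ≤ Hn) : v ≤ KZ Hn xm := by
  rcases (mem_Eset Hn xm x).mp hv with rfl | ⟨a, ha, rfl⟩ | ⟨t, i, a, ht, hi, ha, rfl⟩
  · exact (K_pos Hn xm).le
  · have h1 := amu_le Hn xm (le_trans ha.2 hh)
    have := K_eq Hn xm
    nlinarith [mu_pos Hn xm]
  · have : a + 1 ≤ t := by omega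
    have := key2 Hn xm ht.1 hi.1 this
    linarith

lemma Eset_mono {h : ℕ} : Eset Hn xm x h ⊆ Eset Hn xm x (h+1) := by
  intro v hv
  rcases (mem_Eset Hn xm x).mp hv with rfl | ⟨a, ha, rfl⟩ | ⟨t, i, a, ht, hi, ha, rfl⟩
  · exact (mem_Eset Hn xm x).mpr (Or.inl rfl)
  · exact (mem_Eset Hn xm x).mpr (Or.inr (Or.inl ⟨a, ⟨ha.1, by omega⟩, rfl⟩))
  · exact (mem_Eset Hn xm x).mpr (Or.inr (Or.inr ⟨t, i, a, ht, hi, by omega, rfl⟩))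

end Bounds

section Struct

lemma zero_mem_Eset (h : ℕ) : (0:ℤ) ∈ Eset Hn xm x h :=
  (mem_Eset Hn xm x).mpr (Or.inl rfl)

lemma add_mem_E {h : ℕ} {c w : ℤ} (hx : ∀ t, x t ≤ xm)
    (hc : c ∈ Cset Hn xm x) (hw : w ∈ Eset Hn xm x h)
    (hK : c + w ≤ KZ Hn xm) : c + w ∈ Eset Hn xm x (h+1) := by
  rcases (mem_Cset Hn xm x).mp hc with rfl | rfl | ⟨t', i', ht', hi', rfl⟩
  · rw [zero_add]; exact Eset_mono Hn xm x hw
  · rcases (mem_Eset Hn xm x).mp hw with rfl | ⟨a, ha, rfl⟩ | ⟨t, i, a, ht, hi, ha, rfl⟩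
    · apply (mem_Eset Hn xm x).mpr
      refine Or.inr (Or.inl ⟨1, ⟨le_refl 1, by omega⟩, by push_cast; ring⟩)
    · apply (mem_Eset Hn xm x).mpr
      refine Or.inr (Or.inl ⟨a+1, ⟨by omega, by omega⟩, by push_cast; ring⟩)
    · have heq : muZ Hn xm + (genF Hn xm t i + (a:ℤ) * muZ Hn xm)
          = genF Hn xm t i + ((a+1:ℕ):ℤ) * muZ Hn xm := by push_cast; ring
      rw [heq] at hK ⊢
      have h1 := key1 Hn xm ht.1 ht.2 hi.1 (le_trans hi.2 (hx t)) hK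
      apply (mem_Eset Hn xm x).mpr
      exact Or.inr (Or.inr ⟨t, i, a+1, ht, hi, by omega, rfl⟩)
  · rcases (mem_Eset Hn xm x).mp hw with rfl | ⟨a, ha, rfl⟩ | ⟨t, i, a, ht, hi, ha, rfl⟩
    · apply (mem_Eset Hn xm x).mpr
      refine Or.inr (Or.inr ⟨t', i', 0, ht', hi', by omega, by push_cast; ring⟩)
    · have h1 := key1 Hn xm ht'.1 ht'.2 hi'.1 (le_trans hi'.2 (hx t')) hK
      apply (mem_Eset Hn xm x).mpr
      exact Or.inr (Or.inr ⟨t', i', a, ht', hi', by omega, rfl⟩)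
    · exfalso
      have g1 := genF_ge Hn xm ht'.2 (le_trans hi'.2 (hx t'))
      have g2 := genF_ge Hn xm ht.2 (le_trans hi.2 (hx t))
      have g3 := amu_nonneg Hn xm a
      have g4 := K_eq Hn xm
      nlinarith [mu_pos Hn xm]

lemma E_split {h : ℕ} {w : ℤ} (hw : w ∈ Eset Hn xm x (h+1)) :
    ∃ c ∈ Cset Hn xm x, ∃ v ∈ Eset Hn xm x h, w = c + v := by
  rcases (mem_Eset Hn xm x).mp hw with rfl | ⟨a, ha, rfl⟩ | ⟨t, i, a, ht, hi, ha, rfl⟩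
  · exact ⟨0, (mem_Cset Hn xm x).mpr (Or.inl rfl), 0, zero_mem_Eset Hn xm x h, by ring⟩
  · rcases Nat.eq_or_lt_of_le ha.1 with h1 | h1
    · refine ⟨muZ Hn xm, (mem_Cset Hn xm x).mpr (Or.inr (Or.inl rfl)), 0,
        zero_mem_Eset Hn xm x h, ?_⟩
      rw [← h1]; push_cast; ring
    · refine ⟨muZ Hn xm, (mem_Cset Hn xm x).mpr (Or.inr (Or.inl rfl)),
        ((a-1:ℕ):ℤ) * muZ Hn xm,
        (mem_Eset Hn xm x).mpr (Or.inr (Or.inl ⟨a-1, ⟨by omega, by omega⟩, rfl⟩)), ?_⟩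
      have : ((a-1:ℕ):ℤ) = (a:ℤ) - 1 := by omega
      rw [this]; ring
  · rcases Nat.eq_zero_or_pos a with rfl | h1
    · refine ⟨genF Hn xm t i, (mem_Cset Hn xm x).mpr (Or.inr (Or.inr ⟨t, i, ht, hi, rfl⟩)),
        0, zero_mem_Eset Hn xm x h, by push_cast; ring⟩
    · refine ⟨muZ Hn xm, (mem_Cset Hn xm x).mpr (Or.inr (Or.inl rfl)),
        genF Hn xm t i + ((a-1:ℕ):ℤ) * muZ Hn xm,
        (mem_Eset Hn xm x).mpr (Or.inr (Or.inr ⟨t, i, a-1, ht, hi, by omega, rfl⟩)), ?_⟩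
      have : ((a-1:ℕ):ℤ) = (a:ℤ) - 1 := by omega
      rw [this]; ring

end Struct

section Step

lemma L_eq : LZ Hn xm = 2 * KZ Hn xm + 2 := by unfold LZ NZ; ring

lemma zero_mem_Cset : (0:ℤ) ∈ Cset Hn xm x := (mem_Cset Hn xm x).mpr (Or.inl rfl)

lemma zero_mem_Aset : (0:ℤ) ∈ Aset Hn xm x := by
  apply (mem_Aset Hn xm x).mpr
  left
  have := K_pos Hn xm
  have := L_eq Hn xm
  constructor <;> linarith

lemma N_mem_Aset : NZ Hn xm ∈ Aset Hn xm x := by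
  apply (mem_Aset Hn xm x).mpr
  exact Or.inr ⟨0, zero_mem_Cset Hn xm x, by ring⟩

lemma step_lemma (hx : ∀ t, x t ≤ xm) {h : ℕ} (h1 : 1 ≤ h) (hh : h + 1 ≤ Hn) :
    Aset Hn xm x + Rset Hn xm x h = Rset Hn xm x (h+1) := by
  have hK := K_pos Hn xm
  have hNK : NZ Hn xm = 3 * KZ Hn xm + 3 := rfl
  have hL : LZ Hn xm = NZ Hn xm - KZ Hn xm - 1 := rfl
  have hNmul : NZ Hn xm ≤ (h:ℤ) * NZ Hn xm := by
    have h2 : (1:ℤ) ≤ (h:ℤ) := by exact_mod_cast h1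
    nlinarith
  have hcast : ((h+1:ℕ):ℤ) * NZ Hn xm = (h:ℤ) * NZ Hn xm + NZ Hn xm := by push_cast; ring
  ext z
  simp only [Finset.mem_add]
  constructor
  · rintro ⟨u, hu, v, hv, rfl⟩
    rcases (mem_Aset Hn xm x).mp hu with ⟨hu0, huL⟩ | ⟨c, hc, rfl⟩
    · rcases (mem_Rset Hn xm x).mp hv with ⟨hv0, hvle⟩ | ⟨w, hw, rfl⟩
      · apply (mem_Rset Hn xm x).mpr
        left
        rw [hcast]
        constructor <;> linarith
      · have hw0 := Eset_nonneg Hn xm x hw hx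
        have hwK := Eset_le_K Hn xm x hw (by omega)
        apply (mem_Rset Hn xm x).mpr
        left
        rw [hcast]
        constructor <;> linarith
    · have hc0 := Cset_nonneg Hn xm x hc hx
      have hcK := Cset_le_K Hn xm x hc
      rcases (mem_Rset Hn xm x).mp hv with ⟨hv0, hvle⟩ | ⟨w, hw, rfl⟩
      · apply (mem_Rset Hn xm x).mpr
        left
        rw [hcast]
        constructor <;> linarith
      · have hw0 := Eset_nonneg Hn xm x hw hx
        have hwK := Eset_le_K Hn xm x hw (by omega)
        by_cases hck : c + w ≤ KZ Hn xm
        · apply (mem_Rset Hn xm x).mpr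
          right
          exact ⟨c + w, add_mem_E Hn xm x hx hc hw hck, by rw [hcast]; ring⟩
        · apply (mem_Rset Hn xm x).mpr
          left
          rw [hcast]
          constructor <;> linarith
  · intro hz
    rcases (mem_Rset Hn xm x).mp hz with ⟨hz0, hzle⟩ | ⟨w, hw, rfl⟩
    · rw [hcast] at hzle
      by_cases hc2 : z ≤ (h:ℤ) * NZ Hn xm - KZ Hn xm - 1
      · exact ⟨0, zero_mem_Aset Hn xm x, z,
          (mem_Rset Hn xm x).mpr (Or.inl ⟨hz0, hc2⟩), by ring⟩
      · by_cases hcase : z ≤ (h:ℤ) * NZ Hn xm - KZ Hn xm - 1 + LZ Hn xm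
        · refine ⟨z - ((h:ℤ) * NZ Hn xm - KZ Hn xm - 1), ?_,
            (h:ℤ) * NZ Hn xm - KZ Hn xm - 1, ?_, by ring⟩
          · apply (mem_Aset Hn xm x).mpr
            left
            constructor <;> linarith
          · apply (mem_Rset Hn xm x).mpr
            left
            constructor <;> linarith
        · refine ⟨NZ Hn xm, N_mem_Aset Hn xm x, z - NZ Hn xm, ?_, by ring⟩
          apply (mem_Rset Hn xm x).mpr
          left
          constructor <;> linarith
    · obtain ⟨c, hc, v, hv, rfl⟩ := E_split Hn xm x hw
      exact ⟨NZ Hn xm - c, (mem_Aset Hn xm x).mpr (Or.inr ⟨c, hc, rfl⟩),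
        (h:ℤ) * NZ Hn xm - v, (mem_Rset Hn xm x).mpr (Or.inr ⟨v, hv, rfl⟩),
        by rw [hcast]; ring⟩

end Step

section Main

lemma Aset_eq_Rset_one : Aset Hn xm x = Rset Hn xm x 1 := by
  have hE : Eset Hn xm x 1 = Cset Hn xm x := by
    ext z
    rw [mem_Eset, mem_Cset]
    constructor
    · rintro (rfl | ⟨a, ha, rfl⟩ | ⟨t, i, a, ht, hi, ha, rfl⟩)
      · exact Or.inl rfl
      · have : a = 1 := by omega
        subst this
        exact Or.inr (Or.inl (by push_cast; ring))
      · have : a = 0 := by omega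
        subst this
        exact Or.inr (Or.inr ⟨t, i, ht, hi, by push_cast; ring⟩)
    · rintro (rfl | rfl | ⟨t, i, ht, hi, rfl⟩)
      · exact Or.inl rfl
      · exact Or.inr (Or.inl ⟨1, ⟨le_refl 1, le_refl 1⟩, by push_cast; ring⟩)
      · refine Or.inr (Or.inr ⟨t, i, 0, ht, hi, by omega, by push_cast; ring⟩)
  unfold Aset Rset
  rw [hE]
  congr 1
  · congr 1
    push_cast
    unfold LZ
    ring
  · apply Finset.image_congr
    intro c _
    push_cast
    ring

lemma sumset_eq (hx : ∀ t, x t ≤ xm) {h : ℕ} (h1 : 1 ≤ h) (hh : h ≤ Hn) :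
    finSumset h (Aset Hn xm x) = Rset Hn xm x h := by
  induction h, h1 using Nat.le_induction with
  | base =>
    rw [finSumset_one]
    exact Aset_eq_Rset_one Hn xm x
  | succ h h1 ih =>
    rw [finSumset_succ, ih (by omega), step_lemma Hn xm x hx h1 hh]

end Main

section Cards

lemma mul_dvd_bound {m e c : ℤ} (hm : 0 < m) (h1 : 1 ≤ e) (h2 : e ≤ m - 1)
    (heq : e = m * c) : False := by
  rcases le_or_gt c 0 with hc | hc
  · nlinarith
  · have : 1 ≤ c := hc
    nlinarith

lemma eF_inj {t i t' i' : ℕ} (ht : 1 ≤ t) (hi : 1 ≤ i) (hi2 : i ≤ xm)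
    (ht' : 1 ≤ t') (hi' : 1 ≤ i') (hi2' : i' ≤ xm)
    (heq : eF xm t i = eF xm t' i') : t = t' ∧ i = i' := by
  have hxm0 : (0:ℤ) ≤ (xm:ℤ) := by positivity
  have key : t = t' := by
    rcases lt_trichotomy t t' with hlt | heqt | hlt
    · exfalso
      have hc : (t:ℤ) ≤ (t':ℤ) - 1 := by
        have : (t:ℤ) + 1 ≤ (t':ℤ) := by exact_mod_cast hlt
        linarith
      have := mul_le_mul_of_nonneg_right hc hxm0
      have hiz : (i:ℤ) ≤ (xm:ℤ) := by exact_mod_cast hi2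
      have hiz' : (1:ℤ) ≤ (i':ℤ) := by exact_mod_cast hi'
      unfold eF at heq
      nlinarith
    · exact heqt
    · exfalso
      have hc : (t':ℤ) ≤ (t:ℤ) - 1 := by
        have : (t':ℤ) + 1 ≤ (t:ℤ) := by exact_mod_cast hlt
        linarith
      have := mul_le_mul_of_nonneg_right hc hxm0
      have hiz : (i':ℤ) ≤ (xm:ℤ) := by exact_mod_cast hi2'
      have hiz' : (1:ℤ) ≤ (i:ℤ) := by exact_mod_cast hi
      unfold eF at heq
      nlinarith
  subst key
  refine ⟨rfl, ?_⟩
  unfold eF at heq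
  have : (i:ℤ) = (i':ℤ) := by linarith
  exact_mod_cast this

lemma mu_not_eq_gen {t i a b : ℕ} (ht : 1 ≤ t) (ht2 : t ≤ Hn) (hi : 1 ≤ i) (hi2 : i ≤ xm)
    (heq : (a:ℤ) * muZ Hn xm = genF Hn xm t i + (b:ℤ) * muZ Hn xm) : False := by
  have hKe := K_eq Hn xm
  have hE : eF xm t i = muZ Hn xm * ((2*(Hn:ℤ)+2) - ((t:ℤ)-1) + (b:ℤ) - (a:ℤ)) := by
    unfold genF at heq
    rw [hKe] at heq
    ring_nf at heq ⊢
    linarith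
  exact mul_dvd_bound (mu_pos Hn xm) (eF_ge xm ht hi) (eF_le Hn xm ht2 hi2) hE

lemma gen_add_inj {t i a t' i' a' : ℕ}
    (ht : 1 ≤ t) (ht2 : t ≤ Hn) (hi : 1 ≤ i) (hi2 : i ≤ xm)
    (ht' : 1 ≤ t') (ht2' : t' ≤ Hn) (hi' : 1 ≤ i') (hi2' : i' ≤ xm)
    (heq : genF Hn xm t i + (a:ℤ) * muZ Hn xm = genF Hn xm t' i' + (a':ℤ) * muZ Hn xm) :
    t = t' ∧ i = i' ∧ a = a' := by
  have hmu := mu_pos Hn xm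
  have he1 := eF_ge xm ht hi
  have he2 := eF_le Hn xm ht2 hi2
  have he1' := eF_ge xm ht' hi'
  have he2' := eF_le Hn xm ht2' hi2'
  have hE : eF xm t' i' - eF xm t i
      = muZ Hn xm * (((t:ℤ)-1) - ((t':ℤ)-1) + (a':ℤ) - (a:ℤ)) := by
    unfold genF at heq
    ring_nf at heq ⊢
    linarith
  set c : ℤ := ((t:ℤ)-1) - ((t':ℤ)-1) + (a':ℤ) - (a:ℤ) with hc
  have hc0 : c = 0 := by
    rcases lt_trichotomy c 0 with h0 | h0 | h0
    · exfalso
      have : c ≤ -1 := by omega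
      nlinarith
    · exact h0
    · exfalso
      have : 1 ≤ c := by omega
      nlinarith
  rw [hc0, mul_zero] at hE
  have heF : eF xm t i = eF xm t' i' := by linarith
  obtain ⟨rfl, rfl⟩ := eF_inj xm ht hi hi2 ht' hi' hi2' heF
  refine ⟨rfl, rfl, ?_⟩
  have : (a:ℤ) * muZ Hn xm = (a':ℤ) * muZ Hn xm := by linarith
  have : (a:ℤ) = (a':ℤ) := by
    have hne : muZ Hn xm ≠ 0 := by linarith
    exact mul_right_cancel₀ hne this
  exact_mod_cast this

end Cards

section Cards2

lemma mem_dialP {h : ℕ} {p : (_ : ℕ) × ℕ × ℕ} :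
    p ∈ dialP Hn x h ↔ (1 ≤ p.1 ∧ p.1 ≤ Hn) ∧ (1 ≤ p.2.1 ∧ p.2.1 ≤ x p.1) ∧ p.2.2 < min h p.1 := by
  unfold dialP
  simp only [Finset.mem_sigma, Finset.mem_product, Finset.mem_Icc, Finset.mem_range]

lemma card_Eset (hx : ∀ t, x t ≤ xm) {h : ℕ} (h1 : 1 ≤ h) (hh : h ≤ Hn) :
    (Eset Hn xm x h).card = 1 + h + ∑ t ∈ Icc 1 Hn, x t * min h t := by
  classical
  have hmu := mu_pos Hn xm
  set f : ℕ → ℤ := fun a => (a:ℤ) * muZ Hn xm with hf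
  set g : ((_ : ℕ) × ℕ × ℕ) → ℤ := fun p => genF Hn xm p.1 p.2.1 + (p.2.2:ℤ) * muZ Hn xm with hg
  have hMpos : ∀ a ∈ Icc 1 h, 0 < f a := by
    intro a ha
    rw [Finset.mem_Icc] at ha
    have : (1:ℤ) ≤ (a:ℤ) := by exact_mod_cast ha.1
    have := mul_le_mul_of_nonneg_right this (mu_nonneg Hn xm)
    simp only [hf]
    nlinarith
  have hDpos : ∀ p ∈ dialP Hn x h, 0 < g p := by
    intro p hp
    obtain ⟨ht, hi, _⟩ := (mem_dialP Hn x).mp hp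
    have := genF_ge Hn xm ht.2 (le_trans hi.2 (hx p.1))
    have := amu_nonneg Hn xm p.2.2
    simp only [hg]
    nlinarith
  have h0 : (0:ℤ) ∉ ((Icc 1 h).image f ∪ (dialP Hn x h).image g) := by
    intro hmem
    rcases Finset.mem_union.mp hmem with hm | hm
    · obtain ⟨a, ha, hEq⟩ := Finset.mem_image.mp hm
      exact (hMpos a ha).ne' hEq
    · obtain ⟨p, hp, hEq⟩ := Finset.mem_image.mp hm
      exact (hDpos p hp).ne' hEq
  have hdisj : Disjoint ((Icc 1 h).image f) ((dialP Hn x h).image g) := by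
    rw [Finset.disjoint_left]
    rintro z hz1 hz2
    obtain ⟨a, _, rfl⟩ := Finset.mem_image.mp hz1
    obtain ⟨p, hp, hEq⟩ := Finset.mem_image.mp hz2
    obtain ⟨ht, hi, _⟩ := (mem_dialP Hn x).mp hp
    exact mu_not_eq_gen Hn xm ht.1 ht.2 hi.1 (le_trans hi.2 (hx p.1)) hEq.symm
  have hcardM : ((Icc 1 h).image f).card = h := by
    rw [Finset.card_image_of_injOn, Nat.card_Icc]
    · omega
    · intro a _ b _ hab
      simp only [hf] at hab
      have : (a:ℤ) = (b:ℤ) := mul_right_cancel₀ (by linarith) hab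
      exact_mod_cast this
  have hcardD : ((dialP Hn x h).image g).card = ∑ t ∈ Icc 1 Hn, x t * min h t := by
    rw [Finset.card_image_of_injOn]
    · unfold dialP
      rw [Finset.card_sigma]
      apply Finset.sum_congr rfl
      intro t _
      rw [Finset.card_product, Nat.card_Icc, Finset.card_range]
      have : x t + 1 - 1 = x t := by omega
      rw [this]
    · rintro p hp q hq hEq
      obtain ⟨ht, hi, _⟩ := (mem_dialP Hn x).mp hp
      obtain ⟨ht', hi', _⟩ := (mem_dialP Hn x).mp hq
      simp only [hg] at hEq
      obtain ⟨e1, e2, e3⟩ := gen_add_inj Hn xm ht.1 ht.2 hi.1 (le_trans hi.2 (hx p.1))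
        ht'.1 ht'.2 hi'.1 (le_trans hi'.2 (hx q.1)) hEq
      rcases p with ⟨t, i, a⟩
      rcases q with ⟨t', i', a'⟩
      simp_all
  have : Eset Hn xm x h = insert 0 (((Icc 1 h).image f) ∪ ((dialP Hn x h).image g)) := rfl
  rw [this, Finset.card_insert_of_notMem h0, Finset.card_union_of_disjoint hdisj,
    hcardM, hcardD]
  omega

lemma card_Rset (hx : ∀ t, x t ≤ xm) {h : ℕ} (h1 : 1 ≤ h) (hh : h ≤ Hn) :
    ((Rset Hn xm x h).card : ℤ)
      = (h:ℤ) * NZ Hn xm - KZ Hn xm + 1 + h + ∑ t ∈ Icc 1 Hn, (x t : ℤ) * min (h:ℤ) (t:ℤ) := by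
  classical
  have hK := K_pos Hn xm
  have hNmul : NZ Hn xm ≤ (h:ℤ) * NZ Hn xm := by
    have h2 : (1:ℤ) ≤ (h:ℤ) := by exact_mod_cast h1
    have := K_pos Hn xm
    have hN : (0:ℤ) < NZ Hn xm := by unfold NZ; linarith
    nlinarith
  have hNK : NZ Hn xm = 3 * KZ Hn xm + 3 := rfl
  have hdisj : Disjoint (Icc (0:ℤ) ((h:ℤ) * NZ Hn xm - KZ Hn xm - 1))
      ((Eset Hn xm x h).image fun v => (h:ℤ) * NZ Hn xm - v) := by
    rw [Finset.disjoint_left]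
    rintro z hz1 hz2
    rw [Finset.mem_Icc] at hz1
    obtain ⟨v, hv, rfl⟩ := Finset.mem_image.mp hz2
    have := Eset_le_K Hn xm x hv hh
    linarith [hz1.2]
  have hinj : ((Eset Hn xm x h).image fun v => (h:ℤ) * NZ Hn xm - v).card
      = (Eset Hn xm x h).card := by
    apply Finset.card_image_of_injOn
    intro a _ b _ hab
    simp only at hab
    linarith
  have : (Rset Hn xm x h).card
      = (Icc (0:ℤ) ((h:ℤ) * NZ Hn xm - KZ Hn xm - 1)).card + (Eset Hn xm x h).card := by
    unfold Rset
    rw [Finset.card_union_of_disjoint hdisj, hinj]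
  have hIcc : (((Icc (0:ℤ) ((h:ℤ) * NZ Hn xm - KZ Hn xm - 1)).card : ℕ) : ℤ)
      = (h:ℤ) * NZ Hn xm - KZ Hn xm := by
    rw [Int.card_Icc]
    rw [Int.toNat_of_nonneg (by linarith)]
    ring
  have hE : (((Eset Hn xm x h).card : ℕ) : ℤ)
      = 1 + (h:ℤ) + ∑ t ∈ Icc 1 Hn, (x t : ℤ) * min (h:ℤ) (t:ℤ) := by
    rw [card_Eset Hn xm x hx h1 hh]
    push_cast
    ring
  rw [this, Nat.cast_add, hIcc, hE]
  ring

end Cards2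

lemma card_finSumset (hx : ∀ t, x t ≤ xm) {h : ℕ} (h1 : 1 ≤ h) (hh : h ≤ Hn) :
    ((finSumset h (Aset Hn xm x)).card : ℤ)
      = (h:ℤ) * NZ Hn xm - KZ Hn xm + 1 + h
        + ∑ t ∈ Icc 1 Hn, (x t : ℤ) * min (h:ℤ) (t:ℤ) := by
  rw [sumset_eq Hn xm x hx h1 hh]
  exact card_Rset Hn xm x hx h1 hh

end FKZ

section Assembly

variable (n H : ℕ) (m : ℕ → ℕ → ℤ)

def Wb : ℕ := ∑ j ∈ Finset.Icc 1 n, ∑ h ∈ Finset.Icc 1 H, (m j h).natAbs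

def wI (i h : ℕ) : ℤ :=
  if 1 ≤ i ∧ 1 ≤ h ∧ h ≤ H then ∑ j ∈ Finset.Icc i (n-1), m j h else 0

def Gb : ℤ := 2 * (Wb n H m) + 1

def dI (i h : ℕ) : ℤ :=
  2 * Gb n H m * ((H:ℤ) + 1 - h) + wI n H m i h - wI n H m i (h-1)

def xZ (i t : ℕ) : ℤ :=
  if t < H then dI n H m i t - dI n H m i (t+1) else dI n H m i H

def xF (i t : ℕ) : ℕ :=
  if 1 ≤ t ∧ t ≤ H then (xZ n H m i t).toNat else 0

def xmb : ℕ := 8 * (Wb n H m) + 6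

lemma wI_abs_le (i h : ℕ) : |wI n H m i h| ≤ (Wb n H m : ℤ) := by
  unfold wI
  split
  · rename_i hg
    calc |∑ j ∈ Finset.Icc i (n-1), m j h| ≤ ∑ j ∈ Finset.Icc i (n-1), |m j h| :=
          Finset.abs_sum_le_sum_abs _ _
      _ ≤ ∑ j ∈ Finset.Icc 1 n, |m j h| := by
          apply Finset.sum_le_sum_of_subset_of_nonneg
          · intro j hj
            rw [Finset.mem_Icc] at *
            omega
          · intro j _ _
            positivity
      _ ≤ (Wb n H m : ℤ) := by
          unfold Wb
          push_cast
          apply Finset.sum_le_sum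
          intro j _
          apply Finset.single_le_sum (f := fun h' => |m j h'|)
          · intro h' _
            positivity
          · rw [Finset.mem_Icc]
            omega
  · simp only [abs_zero]
    positivity

lemma wI_zero (i : ℕ) : wI n H m i 0 = 0 := by
  unfold wI
  simp

lemma xZ_nonneg {i t : ℕ} (ht : 1 ≤ t) (htH : t ≤ H) : 0 ≤ xZ n H m i t := by
  have b1 := wI_abs_le n H m i t
  have b2 := wI_abs_le n H m i (t-1)
  have b3 := wI_abs_le n H m i (t+1)
  have hW : (0:ℤ) ≤ (Wb n H m : ℤ) := by positivity
  unfold xZ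
  split
  · rename_i hlt
    unfold dI Gb
    have h1 : (t+1) - 1 = t := by omega
    rw [h1]
    have hc : ((t+1:ℕ):ℤ) = (t:ℤ) + 1 := by push_cast; ring
    rw [hc]
    have := abs_le.mp b1
    have := abs_le.mp b2
    have := abs_le.mp b3
    linarith [this.1, this.2]
  · unfold dI Gb
    have hHt : (H:ℤ) + 1 - (H:ℤ) = 1 := by ring
    have b1' := wI_abs_le n H m i H
    have b2' := wI_abs_le n H m i (H-1)
    have := abs_le.mp b1'
    have := abs_le.mp b2'
    linarith [this.1, this.2]

lemma xZ_le {i t : ℕ} : xZ n H m i t ≤ (xmb n H m : ℤ) := by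
  have b1 := wI_abs_le n H m i t
  have b2 := wI_abs_le n H m i (t-1)
  have b3 := wI_abs_le n H m i (t+1)
  have b4 := wI_abs_le n H m i H
  have b5 := wI_abs_le n H m i (H-1)
  have hW : (0:ℤ) ≤ (Wb n H m : ℤ) := by positivity
  have ha := abs_le.mp b1
  have hb := abs_le.mp b2
  have hc := abs_le.mp b3
  have hd := abs_le.mp b4
  have he := abs_le.mp b5
  unfold xmb
  unfold xZ
  split
  · rename_i hlt
    unfold dI Gb
    have h1 : (t+1) - 1 = t := by omega
    rw [h1]
    have hcast : ((t+1:ℕ):ℤ) = (t:ℤ) + 1 := by push_cast; ring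
    rw [hcast]
    push_cast
    linarith
  · unfold dI Gb
    push_cast
    linarith

lemma xF_le (i t : ℕ) : xF n H m i t ≤ xmb n H m := by
  unfold xF
  split
  · have h1 := xZ_le n H m (i := i) (t := t)
    have h2 : ((xZ n H m i t).toNat : ℤ) ≤ (xmb n H m : ℤ) := by
      rcases le_or_gt 0 (xZ n H m i t) with h | h
      · rw [Int.toNat_of_nonneg h]; exact h1
      · rw [Int.toNat_of_nonpos h.le]
        positivity
    exact_mod_cast h2
  · omega

lemma xF_cast {i t : ℕ} (ht : 1 ≤ t) (htH : t ≤ H) :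
    ((xF n H m i t : ℕ) : ℤ) = xZ n H m i t := by
  unfold xF
  rw [if_pos ⟨ht, htH⟩]
  exact Int.toNat_of_nonneg (xZ_nonneg n H m ht htH)

end Assembly

section Assembly2

variable (n H : ℕ) (m : ℕ → ℕ → ℤ)

lemma tele1 (i s : ℕ) (hs1 : 1 ≤ s) (hsH : s ≤ H) :
    ∑ t ∈ Finset.Icc s H, xZ n H m i t = dI n H m i s := by
  obtain ⟨k, rfl⟩ : ∃ k, H = s + k := ⟨H - s, by omega⟩
  clear hsH
  induction k generalizing s with
  | zero =>
    rw [Nat.add_zero, Finset.Icc_self, Finset.sum_singleton]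
    unfold xZ
    rw [if_neg (by omega)]
  | succ k ih =>
    have hsplit : Finset.Icc s (s + (k+1)) = insert s (Finset.Icc (s+1) (s + (k+1))) := by
      ext a
      simp only [Finset.mem_Icc, Finset.mem_insert]
      omega
    rw [hsplit, Finset.sum_insert (by simp only [Finset.mem_Icc]; omega)]
    have heq : s + (k + 1) = (s + 1) + k := by omega
    have hih := ih (s+1) (by omega)
    rw [heq]
    rw [hih]
    unfold xZ
    rw [if_pos (by omega)]
    ring

lemma tele2 (i h : ℕ) (h1 : 1 ≤ h) (hH : h ≤ H) :
    ∑ t ∈ Finset.Icc 1 H, ((xF n H m i t : ℕ) : ℤ) * min (h:ℤ) (t:ℤ)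
      = ∑ s ∈ Finset.Icc 1 h, dI n H m i s := by
  have step1 : ∀ t ∈ Finset.Icc 1 H,
      ((xF n H m i t : ℕ) : ℤ) * min (h:ℤ) (t:ℤ)
        = ∑ s ∈ Finset.Icc 1 h, (if s ≤ t then xZ n H m i t else 0) := by
    intro t ht
    rw [Finset.mem_Icc] at ht
    rw [xF_cast n H m ht.1 ht.2]
    rw [Finset.sum_ite, Finset.sum_const, Finset.sum_const_zero, add_zero]
    have hfil : Finset.filter (fun s => s ≤ t) (Finset.Icc 1 h) = Finset.Icc 1 (min h t) := by
      ext a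
      simp only [Finset.mem_filter, Finset.mem_Icc, le_min_iff]
      omega
    rw [hfil, Nat.card_Icc]
    have hcard : min h t + 1 - 1 = min h t := by omega
    rw [hcard, nsmul_eq_mul]
    have : ((min h t : ℕ) : ℤ) = min (h:ℤ) (t:ℤ) := by
      push_cast
      rfl
    rw [this]
    ring
  rw [Finset.sum_congr rfl step1, Finset.sum_comm]
  apply Finset.sum_congr rfl
  intro s hs
  rw [Finset.mem_Icc] at hs
  rw [← Finset.sum_filter]
  have hfil : Finset.filter (fun t => s ≤ t) (Finset.Icc 1 H) = Finset.Icc s H := by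
    ext a
    simp only [Finset.mem_filter, Finset.mem_Icc]
    omega
  rw [hfil]
  exact tele1 n H m i s hs.1 (le_trans hs.2 hH)

lemma tele3 (i h : ℕ) :
    ∑ s ∈ Finset.Icc 1 h, dI n H m i s
      = 2 * Gb n H m * (∑ s ∈ Finset.Icc 1 h, ((H:ℤ) + 1 - (s:ℤ))) + wI n H m i h := by
  have hsum : ∑ s ∈ Finset.Icc 1 h, dI n H m i s
      = ∑ s ∈ Finset.Icc 1 h, (2 * Gb n H m * ((H:ℤ) + 1 - (s:ℤ)) + (wI n H m i s - wI n H m i (s-1))) := by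
    apply Finset.sum_congr rfl
    intro s _
    unfold dI
    ring
  rw [hsum, Finset.sum_add_distrib, ← Finset.mul_sum]
  congr 1
  have hshift : ∑ s ∈ Finset.Icc 1 h, (wI n H m i s - wI n H m i (s-1))
      = ∑ k ∈ Finset.range h, (wI n H m i (k+1) - wI n H m i k) := by
    rw [← Finset.Ico_add_one_right_eq_Icc, Finset.sum_Ico_eq_sum_range]
    have hc : h + 1 - 1 = h := by omega
    rw [hc]
    apply Finset.sum_congr rfl
    intro k _
    have e1 : 1 + k = k + 1 := by omega
    rw [e1]
    have e2 : (k + 1) - 1 = k := by omega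
    rw [e2]
  rw [hshift, Finset.sum_range_sub (f := fun k => wI n H m i k)]
  rw [wI_zero]
  ring

end Assembly2

/-- (Fox–Kravitz–Zhang) For all integers `n ≥ 2` and `H ≥ 2`, and for any integers
`m i h` given for all `i = 1,…,n−1` and `h = 1,…,H`, there exist finite sets of
integers `A 1, …, A n` such that `|hAᵢ| − |hA_{i+1}| = m i h` for all `i = 1,…,n−1`
and `h = 1,…,H`. -/
theorem fox_kravitz_zhang (n H : ℕ) (hn : 2 ≤ n) (hH : 2 ≤ H)
    (m : ℕ → ℕ → ℤ) :
    ∃ A : ℕ → Finset ℤ,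
      ∀ i, 1 ≤ i → i ≤ n - 1 → ∀ h, 1 ≤ h → h ≤ H →
        ((finSumset h (A i)).card : ℤ) - ((finSumset h (A (i + 1))).card : ℤ) = m i h := by
  refine ⟨fun i => FKZ.Aset H (xmb n H m) (xF n H m i), ?_⟩
  intro i hi1 hi2 h hh1 hhH
  have hx_i : ∀ t, xF n H m i t ≤ xmb n H m := xF_le n H m i
  have hx_i1 : ∀ t, xF n H m (i+1) t ≤ xmb n H m := xF_le n H m (i+1)
  rw [FKZ.card_finSumset H (xmb n H m) (xF n H m i) hx_i hh1 hhH,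
    FKZ.card_finSumset H (xmb n H m) (xF n H m (i+1)) hx_i1 hh1 hhH]
  rw [tele2 n H m i h hh1 hhH, tele2 n H m (i+1) h hh1 hhH,
    tele3 n H m i h, tele3 n H m (i+1) h]
  have hw : wI n H m i h - wI n H m (i+1) h = m i h := by
    unfold wI
    rw [if_pos ⟨hi1, hh1, hhH⟩, if_pos ⟨by omega, hh1, hhH⟩]
    have hsplit : Finset.Icc i (n-1) = insert i (Finset.Icc (i+1) (n-1)) := by
      ext a
      simp only [Finset.mem_Icc, Finset.mem_insert]
      omega
    rw [hsplit, Finset.sum_insert (by simp only [Finset.mem_Icc]; omega)]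
    ring
  linarith [hw]
end

section
/- For all integers n ≥ 2 and H ≥ 2, for any integers m_{i,h} given for all i = 1,…,n−1 and h = 1,…,H, and for every real number θ > 0, there exist Lebesgue-measurable sets of real numbers A_1,…,A_n such that μ(hA_i) − μ(hA_{i+1}) = θ·m_{i,h} for all i = 1,…,n−1 and h = 1,…,H. -/
open MeasureTheory

/-- The `h`-fold sumset of a subset `A` of `ℝ`:
`hA = {a₁ + ⋯ + a_h : aᵢ ∈ A}`. -/
def sumset (h : ℕ) (A : Set ℝ) : Set ℝ :=
  {x | ∃ f : Fin h → ℝ, (∀ i, f i ∈ A) ∧ ∑ i, f i = x}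


open Set Pointwise


lemma sumset_zero (A : Set ℝ) : sumset 0 A = {0} := by
  ext x
  constructor
  · rintro ⟨f, -, h⟩; simpa using h.symm
  · rintro rfl; exact ⟨fun _ => 0, by simp, by simp⟩

lemma sumset_one (A : Set ℝ) : sumset 1 A = A := by
  ext x
  constructor
  · rintro ⟨f, hf, rfl⟩; simpa using hf 0
  · intro hx; exact ⟨fun _ => x, fun _ => hx, by simp⟩

lemma sumset_succ (h : ℕ) (A : Set ℝ) : sumset (h+1) A = A + sumset h A := by
  ext x
  constructor
  · rintro ⟨f, hf, rfl⟩
    exact ⟨f 0, hf 0, ∑ i : Fin h, f i.succ, ⟨fun i => f i.succ, fun i => hf _, rfl⟩,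
      (Fin.sum_univ_succ f).symm⟩
  · rintro ⟨a, ha, y, ⟨f, hf, rfl⟩, rfl⟩
    refine ⟨Fin.cons a f, ?_, by rw [Fin.sum_cons]⟩
    intro i
    refine Fin.cases ?_ ?_ i
    · simpa using ha
    · intro j; simpa using hf j

lemma add_mem_sumset {A B : Set ℝ} {a b : ℕ} {u v : ℝ}
    (hu : u ∈ sumset a A) (hv : v ∈ sumset b B) :
    u + v ∈ sumset (a + b) (A ∪ B) := by
  obtain ⟨f, hf, rfl⟩ := hu
  obtain ⟨g, hg, rfl⟩ := hv
  refine ⟨Fin.append f g, ?_, ?_⟩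
  · intro i
    refine Fin.addCases (fun j => ?_) (fun j => ?_) i
    · rw [Fin.append_left]; exact Or.inl (hf j)
    · rw [Fin.append_right]; exact Or.inr (hg j)
  · rw [Fin.sum_univ_add]
    simp [Fin.append_left, Fin.append_right]
lemma sumset_union (h : ℕ) (X Y : Set ℝ) :
    sumset h (X ∪ Y) = ⋃ b ∈ Finset.range (h+1), sumset b X + sumset (h - b) Y := by
  apply Set.Subset.antisymm
  · induction h with
    | zero =>
      intro x hx
      simp only [Set.mem_iUnion]
      exact ⟨0, by simp, by rw [sumset_zero] at hx ⊢; rw [sumset_zero]; simpa using hx⟩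
    | succ h ih =>
      intro x hx
      rw [sumset_succ] at hx
      obtain ⟨a, ha, y, hy, rfl⟩ := hx
      obtain ⟨b, hb, hyb⟩ := by simpa only [Set.mem_iUnion] using ih hy
      simp only [Finset.mem_range] at hb
      obtain ⟨u, hu, v, hv, rfl⟩ := hyb
      simp only [Set.mem_iUnion]
      rcases ha with ha | ha
      · refine ⟨b + 1, ?_, ?_⟩
        · simp; omega
        · have : a + u ∈ sumset (b+1) X := by
            rw [sumset_succ]; exact ⟨a, ha, u, hu, rfl⟩
          have hsub : h + 1 - (b + 1) = h - b := by omega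
          rw [hsub]
          exact ⟨a + u, this, v, hv, by ring⟩
      · refine ⟨b, ?_, ?_⟩
        · simp; omega
        · have : a + v ∈ sumset (h - b + 1) Y := by
            rw [sumset_succ]; exact ⟨a, ha, v, hv, rfl⟩
          have hsub : h + 1 - b = h - b + 1 := by omega
          rw [hsub]
          exact ⟨u, hu, a + v, this, by ring⟩
  · intro x hx
    simp only [Set.mem_iUnion] at hx
    obtain ⟨b, hb, u, hu, v, hv, rfl⟩ := hx
    simp only [Finset.mem_range] at hb
    have := add_mem_sumset (A := X) (B := Y) hu hv
    rwa [Nat.add_sub_cancel' (by omega : b ≤ h)] at this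

lemma sumset_Icc {a b : ℝ} (hab : a ≤ b) (h : ℕ) :
    sumset h (Icc a b) = Icc ((h:ℝ)*a) ((h:ℝ)*b) := by
  induction h with
  | zero => simp [sumset_zero]
  | succ h ih =>
    rw [sumset_succ, ih, Set.Icc_add_Icc hab (mul_le_mul_of_nonneg_left hab (by positivity))]
    congr 1 <;> push_cast <;> ring
lemma sumset_image_add (h : ℕ) (t : ℝ) (A : Set ℝ) :
    sumset h ((t + ·) '' A) = ((h:ℝ)*t + ·) '' sumset h A := by
  ext x
  constructor
  · rintro ⟨f, hf, rfl⟩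
    refine ⟨∑ i, (f i - t), ⟨fun i => f i - t, fun i => ?_, rfl⟩, ?_⟩
    · obtain ⟨a, ha, hat⟩ := hf i
      simpa [← hat] using ha
    · rw [Finset.sum_sub_distrib]
      simp
  · rintro ⟨y, ⟨f, hf, rfl⟩, rfl⟩
    refine ⟨fun i => t + f i, fun i => ⟨f i, hf i, rfl⟩, ?_⟩
    rw [Finset.sum_add_distrib]
    simp

lemma sumset_compact {A : Set ℝ} (hA : IsCompact A) (h : ℕ) :
    IsCompact (sumset h A) := by
  have : sumset h A = (fun f : Fin h → ℝ => ∑ i, f i) '' (Set.univ.pi fun _ => A) := by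
    ext x
    constructor
    · rintro ⟨f, hf, rfl⟩; exact ⟨f, fun i _ => hf i, rfl⟩
    · rintro ⟨f, hf, rfl⟩; exact ⟨f, fun i => hf i trivial, rfl⟩
  rw [this]
  exact (isCompact_univ_pi fun _ => hA).image (continuous_finset_sum _ fun i _ => continuous_apply i)

lemma sumset_subset_Icc {A : Set ℝ} {D : ℝ} (hA : A ⊆ Icc 0 D) (h : ℕ) :
    sumset h A ⊆ Icc 0 ((h:ℝ)*D) := by
  rintro x ⟨f, hf, rfl⟩
  constructor
  · exact Finset.sum_nonneg fun i _ => (hA (hf i)).1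
  · calc ∑ i, f i ≤ ∑ _i : Fin h, D := Finset.sum_le_sum fun i _ => (hA (hf i)).2
    _ = h * D := by simp

lemma volume_image_add (t : ℝ) (A : Set ℝ) : volume ((t + ·) '' A) = volume A := by
  rw [Set.image_add_left]
  exact measure_preimage_add volume (-t) A

lemma union_Icc_merge {g W : ℝ} (hg : 0 ≤ g) (hW : g ≤ W) (a : ℕ) :
    ⋃ s ∈ Finset.range (a+1), Icc ((s:ℝ)*g) ((s:ℝ)*g + W) = Icc 0 ((a:ℝ)*g + W) := by
  induction a with
  | zero => simp
  | succ a ih =>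
    rw [Finset.range_add_one, Finset.set_biUnion_insert, ih]
    have ha : (0:ℝ) ≤ (a:ℝ) := Nat.cast_nonneg a
    ext x
    constructor
    · rintro (hx | hx)
      · push_cast at hx ⊢
        constructor
        · nlinarith [hx.1]
        · linarith [hx.2]
      · push_cast
        constructor
        · exact hx.1
        · nlinarith [hx.2]
    · intro hx
      push_cast at hx
      by_cases hc : x ≤ (a:ℝ)*g + W
      · right; exact ⟨hx.1, hc⟩
      · left
        push_cast
        constructor
        · nlinarith
        · linarith [hx.2]
lemma add_image_right (X S : Set ℝ) (y : ℝ) : X + (y + ·) '' S = (y + ·) '' (X + S) := by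
  ext x
  constructor
  · rintro ⟨u, hu, v, ⟨s, hs, rfl⟩, rfl⟩
    exact ⟨u + s, ⟨u, hu, s, hs, rfl⟩, by ring⟩
  · rintro ⟨w, ⟨u, hu, s, hs, rfl⟩, rfl⟩
    exact ⟨u, hu, y + s, ⟨s, hs, rfl⟩, by ring⟩

lemma Icc_add_eq_image {u R : ℝ} (S : Set ℝ) :
    Icc u (u + R) + S = (u + ·) '' (Icc 0 R + S) := by
  ext x
  constructor
  · rintro ⟨a, ha, s, hs, rfl⟩
    exact ⟨(a - u) + s, ⟨a - u, ⟨by linarith [ha.1], by linarith [ha.2]⟩, s, hs, rfl⟩, by ring⟩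
  · rintro ⟨w, ⟨a, ha, s, hs, rfl⟩, rfl⟩
    exact ⟨u + a, ⟨by linarith [ha.1], by linarith [ha.2]⟩, s, hs, by ring⟩

lemma biUnion_add (s : Finset ℕ) (f : ℕ → Set ℝ) (T : Set ℝ) :
    (⋃ b ∈ s, f b) + T = ⋃ b ∈ s, (f b + T) := by
  ext x
  constructor
  · rintro ⟨u, hu, v, hv, rfl⟩
    simp only [Set.mem_iUnion] at hu ⊢
    obtain ⟨b, hb, hub⟩ := hu
    exact ⟨b, hb, u, hub, v, hv, rfl⟩
  · intro hx
    simp only [Set.mem_iUnion] at hx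
    obtain ⟨b, hb, u, hu, v, hv, rfl⟩ := hx
    exact ⟨u, Set.mem_biUnion hb hu, v, hv, rfl⟩

lemma vol_union_Icc_disjoint {g W : ℝ} (hW : 0 ≤ W) (hg : W < g) (a : ℕ) :
    volume (⋃ s ∈ Finset.range (a+1), Icc ((s:ℝ)*g) ((s:ℝ)*g + W))
      = ENNReal.ofReal (((a:ℝ)+1)*W) := by
  rw [measure_biUnion_finset ?hd fun b _ => measurableSet_Icc]
  · rw [Finset.sum_congr rfl (g := fun _ => ENNReal.ofReal W)
      (fun b _ => by rw [Real.volume_Icc]; ring_nf)]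
    rw [Finset.sum_const, Finset.card_range, nsmul_eq_mul]
    rw [← ENNReal.ofReal_natCast, ← ENNReal.ofReal_mul (by positivity)]
    push_cast; ring_nf
  case hd =>
    intro b hb c hc hbc
    simp only [Finset.coe_range, Set.mem_Iio] at hb hc
    have hbc' : (b:ℝ) ≠ (c:ℝ) := by exact_mod_cast hbc
    apply Set.disjoint_left.2
    intro x hxb hxc
    rcases lt_or_gt_of_ne hbc with hlt | hlt
    · have hb1 : (b:ℝ) + 1 ≤ (c:ℝ) := by exact_mod_cast hlt
      have := hxb.2; have := hxc.1
      nlinarith [mul_le_mul_of_nonneg_right hb1 (le_of_lt (lt_of_le_of_lt hW hg))]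
    · have hb1 : (c:ℝ) + 1 ≤ (b:ℝ) := by exact_mod_cast hlt
      have := hxc.2; have := hxb.1
      nlinarith [mul_le_mul_of_nonneg_right hb1 (le_of_lt (lt_of_le_of_lt hW hg))]
def block (p : ℝ) (k : ℕ) : Set ℝ := Icc 0 p ∪ Icc ((k:ℝ)*p) ((k:ℝ)*p + p)

lemma block_sumset {p : ℝ} (hp : 0 < p) (k b : ℕ) :
    sumset b (block p k)
      = ⋃ s ∈ Finset.range (b+1), Icc ((s:ℝ)*((k:ℝ)*p)) ((s:ℝ)*((k:ℝ)*p) + (b:ℝ)*p) := by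
  rw [block, sumset_union]
  ext x
  simp only [Set.mem_iUnion, Finset.mem_range]
  constructor
  · rintro ⟨c, hc, hx⟩
    refine ⟨b - c, by omega, ?_⟩
    rw [sumset_Icc hp.le, sumset_Icc (by linarith : (k:ℝ)*p ≤ (k:ℝ)*p + p),
      Set.Icc_add_Icc (by nlinarith [(Nat.cast_nonneg c : (0:ℝ) ≤ c)]) (mul_le_mul_of_nonneg_left (by linarith) (Nat.cast_nonneg _))] at hx
    have hcast : ((b - c : ℕ) : ℝ) = (b:ℝ) - (c:ℝ) := by
      rw [Nat.cast_sub (by omega)]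
    rw [hcast] at hx ⊢
    convert hx using 2 <;> [rfl; ring_nf; ring_nf]
  · rintro ⟨s, hs, hx⟩
    refine ⟨b - s, by omega, ?_⟩
    rw [sumset_Icc hp.le, sumset_Icc (by linarith : (k:ℝ)*p ≤ (k:ℝ)*p + p),
      Set.Icc_add_Icc (by nlinarith [(Nat.cast_nonneg (b-s) : (0:ℝ) ≤ (b-s:ℕ))]) (mul_le_mul_of_nonneg_left (by linarith) (Nat.cast_nonneg _))]
    have h1 : b - (b - s) = s := by omega
    have hcast : ((b - s : ℕ) : ℝ) = (b:ℝ) - (s:ℝ) := by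
      rw [Nat.cast_sub (by omega)]
    rw [h1, hcast]
    convert hx using 2 <;> [rfl; ring_nf; ring_nf]
lemma zero_add_set (S : Set ℝ) : {(0:ℝ)} + S = S := by
  ext x
  constructor
  · rintro ⟨a, ha, s, hs, rfl⟩
    simp only [Set.mem_singleton_iff] at ha
    simpa [ha] using hs
  · intro hx; exact ⟨0, rfl, x, hx, by ring⟩

lemma add_biUnion (s : Finset ℕ) (f : ℕ → Set ℝ) (T : Set ℝ) :
    T + (⋃ b ∈ s, f b) = ⋃ b ∈ s, (T + f b) := by
  ext x
  constructor
  · rintro ⟨u, hu, v, hv, rfl⟩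
    simp only [Set.mem_iUnion] at hv ⊢
    obtain ⟨b, hb, hvb⟩ := hv
    exact ⟨b, hb, u, hu, v, hvb, rfl⟩
  · intro hx
    simp only [Set.mem_iUnion] at hx
    obtain ⟨b, hb, u, hu, v, hv, rfl⟩ := hx
    exact ⟨u, hu, v, Set.mem_biUnion hb hv, rfl⟩

lemma union_Icc_chain (c : ℕ) (u v : ℕ → ℝ)
    (hu0 : u 0 = 0) (huv : ∀ j, j ≤ c → u j ≤ v j)
    (hcov : ∀ j, j + 1 ≤ c → u (j+1) ≤ v j)
    (hvmono : ∀ j, j + 1 ≤ c → v j ≤ v (j+1))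
    (humono : ∀ j, j + 1 ≤ c → u j ≤ u (j+1)) :
    ⋃ j ∈ Finset.range (c+1), Icc (u j) (v j) = Icc 0 (v c) := by
  induction c with
  | zero => simp [hu0]
  | succ c ih =>
    rw [Finset.range_add_one, Finset.set_biUnion_insert,
      ih (fun j hj => huv j (by omega)) (fun j hj => hcov j (by omega))
        (fun j hj => hvmono j (by omega)) (fun j hj => humono j (by omega))]
    have hu0c : 0 ≤ u (c+1) := by
      clear ih
      have : ∀ j, j ≤ c + 1 → 0 ≤ u j := by
        intro j hj
        induction j with
        | zero => simp [hu0]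
        | succ j ihj => exact le_trans (ihj (by omega)) (humono j (by omega))
      exact this (c+1) le_rfl
    ext x
    constructor
    · rintro (hx | hx)
      · exact ⟨le_trans hu0c hx.1, le_trans hx.2 (le_refl _)⟩
      · exact ⟨hx.1, le_trans hx.2 (hvmono c le_rfl)⟩
    · intro hx
      by_cases hc : x ≤ v c
      · right; exact ⟨hx.1, hc⟩
      · left; exact ⟨le_trans (hcov c le_rfl) (by linarith), hx.2⟩

lemma biUnion_reflect0 (c : ℕ) (F : ℕ → Set ℝ) :
    ⋃ b ∈ Finset.range (c+1), F (c - b) = ⋃ j ∈ Finset.range (c+1), F j := by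
  ext x
  simp only [Set.mem_iUnion, Finset.mem_range]
  constructor
  · rintro ⟨b, hb, hx⟩; exact ⟨c - b, by omega, hx⟩
  · rintro ⟨j, hj, hx⟩; exact ⟨c - j, by omega, by rw [show c - (c - j) = j by omega]; exact hx⟩

lemma union_Icc_chain2 (c : ℕ) (u v : ℕ → ℝ)
    (hu0 : u 0 = 0) (huv : ∀ j, j ≤ c → u j ≤ v j)
    (hcov : ∀ j, j + 1 ≤ c → u (j+1) ≤ v j)
    (hvmono : ∀ j, j + 1 ≤ c → v j ≤ v (j+1))
    (humono : ∀ j, j + 1 ≤ c → u j ≤ u (j+1)) :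
    ⋃ b ∈ Finset.range (c+1), Icc (u (c - b)) (v (c - b)) = Icc 0 (v c) := by
  have h := union_Icc_chain c u v hu0 huv hcov hvmono humono
  rw [← h]
  exact biUnion_reflect0 c (fun j => Icc (u j) (v j))

lemma sumset_singleton_zero (c : ℕ) : sumset c {(0:ℝ)} = {0} := by
  ext x
  constructor
  · rintro ⟨f, hf, rfl⟩
    simp only [Set.mem_singleton_iff] at hf ⊢
    exact Finset.sum_eq_zero fun i _ => hf i
  · rintro rfl
    exact ⟨fun _ => 0, fun _ => rfl, by simp⟩

def chain : List (ℝ × ℕ × ℝ) → Set ℝ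
  | [] => {0}
  | (p, k, t) :: L => block p k ∪ ((t + ·) '' chain L)

def dl : List (ℝ × ℕ × ℝ) → ℝ
  | [] => 0
  | (_, _, t) :: L => t + dl L

def good (H : ℕ) : List (ℝ × ℕ × ℝ) → Prop
  | [] => True
  | (p, k, t) :: L => 0 < p ∧ 1 ≤ k ∧
      ((H:ℝ)+1) * dl L ≤ p ∧ ((H:ℝ)+1) * (((k:ℝ)+1)*p + dl L) ≤ t ∧ good H L

lemma dl_nonneg {H : ℕ} : ∀ {L}, good H L → 0 ≤ dl L := by
  intro L
  induction L with
  | nil => intro _; simp [dl]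
  | cons pkt L ih =>
    obtain ⟨p, k, t⟩ := pkt
    rintro ⟨hp, hk, hpd, htp, hg⟩
    have h1 := ih hg
    have hH : (0:ℝ) ≤ (H:ℝ) := Nat.cast_nonneg H
    have hk0 : (0:ℝ) ≤ (k:ℝ) := Nat.cast_nonneg k
    have he : (0:ℝ) ≤ ((k:ℝ)+1)*p + dl L := by nlinarith
    have het : ((k:ℝ)+1)*p + dl L ≤ t := by nlinarith [mul_nonneg hH he]
    simp only [dl]
    linarith

lemma chain_compact : ∀ L, IsCompact (chain L) := by
  intro L
  induction L with
  | nil => exact isCompact_singleton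
  | cons pkt L ih =>
    obtain ⟨p, k, t⟩ := pkt
    exact ((isCompact_Icc.union isCompact_Icc).union
      (ih.image (continuous_const.add continuous_id)))

lemma chain_subset {H : ℕ} : ∀ {L}, good H L → chain L ⊆ Icc 0 (dl L) := by
  intro L
  induction L with
  | nil => intro _; simp [chain, dl]
  | cons pkt L ih =>
    obtain ⟨p, k, t⟩ := pkt
    rintro ⟨hp, hk, hpd, htp, hg⟩
    have h1 := dl_nonneg hg
    have hH : (0:ℝ) ≤ (H:ℝ) := Nat.cast_nonneg H
    have hk0 : (1:ℝ) ≤ (k:ℝ) := by exact_mod_cast hk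
    have he : (0:ℝ) ≤ ((k:ℝ)+1)*p + dl L := by nlinarith
    have het : ((k:ℝ)+1)*p + dl L ≤ t := by nlinarith [mul_nonneg hH he]
    have hkp : ((k:ℝ)+1)*p ≤ t := by linarith
    rintro x (hx | ⟨y, hy, rfl⟩)
    · rcases hx with hx | hx
      · exact ⟨hx.1, by simp only [dl]; nlinarith [hx.2]⟩
      · exact ⟨by nlinarith [hx.1], by simp only [dl]; nlinarith [hx.2]⟩
    · have := ih hg hy
      exact ⟨by simp only [dl] at *; nlinarith [this.1, hkp], by
        simp only [dl] at *; nlinarith [this.2]⟩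


lemma chain_smear {H : ℕ} : ∀ L, good H L → ∀ c, c ≤ H → ∀ L', dl L ≤ L' →
    Icc 0 L' + sumset c (chain L) = Icc 0 (L' + (c:ℝ) * dl L) := by
  intro L
  induction L with
  | nil =>
    intro _ c _ L' hL'
    rw [show chain [] = {0} from rfl, sumset_singleton_zero, add_comm, zero_add_set]
    simp only [dl] at hL' ⊢
    rw [mul_zero, add_zero]
  | cons pkt L ih =>
    obtain ⟨p, k, t⟩ := pkt
    rintro ⟨hp, hk, hpd, htp, hg⟩ c hc L' hL'
    have hdl0 : 0 ≤ dl L := dl_nonneg hg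
    have hH : (0:ℝ) ≤ (H:ℝ) := Nat.cast_nonneg H
    have hk1 : (1:ℝ) ≤ (k:ℝ) := by exact_mod_cast hk
    have hdlc : dl ((p, k, t) :: L) = t + dl L := rfl
    rw [hdlc] at hL' ⊢
    have he : (0:ℝ) ≤ ((k:ℝ)+1)*p + dl L := by nlinarith
    have het : ((k:ℝ)+1)*p + dl L ≤ t := by nlinarith [mul_nonneg hH he]
    have ht0 : 0 ≤ t := by nlinarith
    have hkpt : ((k:ℝ)+1)*p ≤ t := by linarith
    have hL'0 : 0 ≤ L' := by nlinarith
    show Icc 0 L' + sumset c (block p k ∪ ((t + ·) '' chain L)) = _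
    rw [sumset_union, add_biUnion]
    have hterm : ∀ b : ℕ, b ∈ Finset.range (c+1) →
        Icc 0 L' + (sumset b (block p k) + sumset (c - b) ((t + ·) '' chain L))
          = Icc (((c - b : ℕ):ℝ)*t)
              (((c - b : ℕ):ℝ)*t + (((c - (c - b) : ℕ):ℝ)*(((k:ℝ)+1)*p) + L' + ((c - b : ℕ):ℝ)*dl L)) := by
      intro b hb
      simp only [Finset.mem_range] at hb
      have hbc : b ≤ c := by omega
      have hcbb : c - (c - b) = b := by omega
      have hbR : (0:ℝ) ≤ (b:ℝ) := Nat.cast_nonneg b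
      have hcbR : (0:ℝ) ≤ ((c - b : ℕ):ℝ) := Nat.cast_nonneg _
      have hA5 : Icc 0 L' + sumset b (block p k)
          = Icc 0 ((b:ℝ)*((k:ℝ)*p) + (L' + (b:ℝ)*p)) := by
        rw [block_sumset hp, add_biUnion]
        rw [Set.iUnion_congr fun s => Set.iUnion_congr fun hs => by
          rw [Set.Icc_add_Icc hL'0 (by nlinarith [(Nat.cast_nonneg s : (0:ℝ) ≤ (s:ℕ)), hp.le] :
              (s:ℝ)*((k:ℝ)*p) ≤ (s:ℝ)*((k:ℝ)*p) + (b:ℝ)*p), zero_add,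
            show L' + ((s:ℝ)*((k:ℝ)*p) + (b:ℝ)*p) = (s:ℝ)*((k:ℝ)*p) + (L' + (b:ℝ)*p) by ring]]
        exact union_Icc_merge (by positivity) (by nlinarith [mul_nonneg hbR hp.le]) b
      calc Icc 0 L' + (sumset b (block p k) + sumset (c - b) ((t + ·) '' chain L))
          = Icc 0 L' + (sumset b (block p k) +
              ((((c-b : ℕ):ℝ)*t + ·) '' sumset (c - b) (chain L))) := by
            rw [sumset_image_add]
        _ = ((((c-b : ℕ):ℝ)*t + ·) '' (Icc 0 L' + (sumset b (block p k) + sumset (c - b) (chain L)))) := by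
            rw [add_image_right, add_image_right]
        _ = ((((c-b : ℕ):ℝ)*t + ·) '' (Icc 0 ((b:ℝ)*((k:ℝ)*p) + (L' + (b:ℝ)*p)) + sumset (c - b) (chain L))) := by
            rw [← add_assoc, hA5]
        _ = ((((c-b : ℕ):ℝ)*t + ·) '' (Icc 0 ((b:ℝ)*((k:ℝ)*p) + (L' + (b:ℝ)*p) + ((c-b : ℕ):ℝ) * dl L))) := by
            rw [ih hg (c-b) (by omega) _ (by nlinarith [mul_nonneg hbR hp.le, mul_nonneg hbR (mul_nonneg (by linarith : (0:ℝ) ≤ (k:ℝ)) hp.le)])]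
        _ = _ := by
            rw [Set.image_const_add_Icc, add_zero]
            have hcbb' : ((c - (c - b) : ℕ):ℝ) = (b:ℝ) := by rw [hcbb]
            rw [hcbb']
            congr 1
            ring
    have step1 : (⋃ b ∈ Finset.range (c+1),
        (Icc 0 L' + (sumset b (block p k) + sumset (c - b) ((t + ·) '' chain L))))
        = ⋃ b ∈ Finset.range (c+1), Icc (((c - b : ℕ):ℝ)*t)
            (((c - b : ℕ):ℝ)*t + (((c - (c - b) : ℕ):ℝ)*(((k:ℝ)+1)*p) + L' + ((c - b : ℕ):ℝ)*dl L)) :=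
      Set.iUnion_congr fun b => Set.iUnion_congr fun hb => hterm b hb
    rw [step1]
    have step2 := union_Icc_chain2 c (fun j => (j:ℝ)*t)
      (fun j => (j:ℝ)*t + (((c - j : ℕ):ℝ)*(((k:ℝ)+1)*p) + L' + (j:ℝ)*dl L))
      (by simp) ?huv ?hcov ?hvmono ?humono
    refine step2.trans ?_
    · beta_reduce
      rw [Nat.sub_self]
      congr 1
      push_cast
      ring
    case huv =>
      intro j hj
      beta_reduce
      have h0 : (0:ℝ) ≤ ((c - j : ℕ):ℝ) := Nat.cast_nonneg _
      have hkp0 : (0:ℝ) ≤ ((k:ℝ)+1)*p := by positivity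
      have hj0 : (0:ℝ) ≤ (j:ℝ) := Nat.cast_nonneg _
      linarith [mul_nonneg h0 hkp0, mul_nonneg hj0 hdl0, hL'0]
    case hcov =>
      intro j hj
      beta_reduce
      have h1 : (1:ℝ) ≤ ((c - j : ℕ):ℝ) := by
        have : 1 ≤ c - j := by omega
        exact_mod_cast this
      have hkp0 : (0:ℝ) ≤ ((k:ℝ)+1)*p := by positivity
      have hj0 : (0:ℝ) ≤ (j:ℝ) := Nat.cast_nonneg _
      rw [Nat.cast_add, Nat.cast_one]
      linarith [mul_nonneg (by linarith : (0:ℝ) ≤ ((c - j : ℕ):ℝ)) hkp0,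
        mul_nonneg hj0 hdl0]
    case hvmono =>
      intro j hj
      beta_reduce
      have hc1 : ((c - (j+1) : ℕ):ℝ) = ((c - j : ℕ):ℝ) - 1 := by
        have h2 : c - (j+1) + 1 = c - j := by omega
        have h3 := congrArg (fun n : ℕ => (n:ℝ)) h2
        push_cast at h3
        linarith
      rw [hc1, Nat.cast_add, Nat.cast_one]
      have hx : (((c - j : ℕ):ℝ) - 1)*(((k:ℝ)+1)*p)
          = ((c - j : ℕ):ℝ)*(((k:ℝ)+1)*p) - ((k:ℝ)+1)*p := by ring
      rw [hx]
      linarith [hkpt, hdl0]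
    case humono =>
      intro j hj
      beta_reduce
      rw [Nat.cast_add, Nat.cast_one]
      linarith [ht0]

noncomputable def vform : List (ℝ × ℕ × ℝ) → ℕ → ℝ
  | [], _ => 0
  | (p, k, _) :: L, h =>
      (∑ b ∈ Finset.Icc 1 h, (p * ((b:ℝ) * (((min b k : ℕ):ℝ) + 1)) +
        (if b < k then (b:ℝ)+1 else 1) * ((h - b : ℕ):ℝ) * dl L)) + vform L h

lemma vform_nonneg {H : ℕ} : ∀ {L}, good H L → ∀ h, 0 ≤ vform L h := by
  intro L
  induction L with
  | nil => intro _ h; simp [vform]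
  | cons pkt L ih =>
    obtain ⟨p, k, t⟩ := pkt
    rintro ⟨hp, hk, hpd, htp, hg⟩ h
    have hdl0 : 0 ≤ dl L := dl_nonneg hg
    have h1 := ih hg h
    simp only [vform]
    have : ∀ b ∈ Finset.Icc 1 h, (0:ℝ) ≤ p * ((b:ℝ) * (((min b k : ℕ):ℝ) + 1)) +
        (if b < k then (b:ℝ)+1 else 1) * ((h - b : ℕ):ℝ) * dl L := by
      intro b _
      have hb0 : (0:ℝ) ≤ (b:ℝ) := Nat.cast_nonneg _
      have hm0 : (0:ℝ) ≤ ((min b k : ℕ):ℝ) := Nat.cast_nonneg _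
      have hhb : (0:ℝ) ≤ ((h - b : ℕ):ℝ) := Nat.cast_nonneg _
      have hif : (0:ℝ) ≤ (if b < k then (b:ℝ)+1 else 1) := by
        split <;> linarith
      have := mul_nonneg (mul_nonneg hif hhb) hdl0
      nlinarith [mul_nonneg hp.le (mul_nonneg hb0 (by linarith : (0:ℝ) ≤ ((min b k : ℕ):ℝ) + 1))]
    linarith [Finset.sum_nonneg this]

lemma block_subset {p : ℝ} (hp : 0 < p) (k : ℕ) :
    block p k ⊆ Icc 0 (((k:ℝ)+1)*p) := by
  have hk0 : (0:ℝ) ≤ (k:ℝ) := Nat.cast_nonneg _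
  rintro x (hx | hx)
  · exact ⟨hx.1, by nlinarith [hx.2]⟩
  · exact ⟨by nlinarith [hx.1], by nlinarith [hx.2]⟩

lemma range_succ_eq_insert_Icc (h : ℕ) : Finset.range (h+1) = insert 0 (Finset.Icc 1 h) := by
  ext a
  simp only [Finset.mem_range, Finset.mem_insert, Finset.mem_Icc]
  omega


set_option maxHeartbeats 2000000 in
lemma chain_volume {H : ℕ} : ∀ L, good H L → ∀ h, h ≤ H →
    volume (sumset h (chain L)) = ENNReal.ofReal (vform L h) := by
  intro L
  induction L with
  | nil =>
    intro _ h _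
    rw [show chain [] = {0} from rfl, sumset_singleton_zero]
    simp [vform]
  | cons pkt L ih =>
    obtain ⟨p, k, t⟩ := pkt
    rintro ⟨hp, hk, hpd, htp, hg⟩ h hh
    have hdl0 : 0 ≤ dl L := dl_nonneg hg
    have hH : (0:ℝ) ≤ (H:ℝ) := Nat.cast_nonneg H
    have hk1 : (1:ℝ) ≤ (k:ℝ) := by exact_mod_cast hk
    have he : (0:ℝ) ≤ ((k:ℝ)+1)*p + dl L := by nlinarith
    have het : ((k:ℝ)+1)*p + dl L ≤ t := by nlinarith [mul_nonneg hH he]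
    have ht0 : 0 ≤ t := by nlinarith
    have hkpt : ((k:ℝ)+1)*p ≤ t := by linarith
    have hMt : (H:ℝ)*(((k:ℝ)+1)*p + dl L) < t := by nlinarith
    -- the chain and its components
    have hcomp_sub : ∀ b, b ≤ h →
        sumset b (block p k) + sumset (h - b) ((t + ·) '' chain L) ⊆
          Icc (((h-b : ℕ):ℝ)*t) (((h-b : ℕ):ℝ)*t + (H:ℝ)*(((k:ℝ)+1)*p + dl L)) := by
      intro b hb
      have h1 : sumset b (block p k) ⊆ Icc 0 ((b:ℝ)*(((k:ℝ)+1)*p)) :=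
        sumset_subset_Icc (block_subset hp k) b
      have h2 : sumset (h - b) ((t + ·) '' chain L) ⊆
          Icc (((h-b:ℕ):ℝ)*t) (((h-b:ℕ):ℝ)*t + ((h-b:ℕ):ℝ)*dl L) := by
        rw [sumset_image_add]
        rintro x ⟨y, hy, rfl⟩
        have hyy := sumset_subset_Icc (chain_subset hg) (h - b) hy
        constructor
        · beta_reduce; linarith [hyy.1]
        · beta_reduce; linarith [hyy.2]
      rintro x ⟨u, hu, v, hv, rfl⟩
      have hu' := h1 hu
      have hv' := h2 hv
      have hbH : (b:ℝ) ≤ (H:ℝ) := by exact_mod_cast le_trans hb hh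
      have hbH' : ((h - b : ℕ):ℝ) ≤ (H:ℝ) := by
        have : h - b ≤ H := by omega
        exact_mod_cast this
      have hkp0 : (0:ℝ) ≤ ((k:ℝ)+1)*p := by positivity
      constructor
      · beta_reduce; linarith [hu'.1, hv'.1]
      · beta_reduce
        have hub : u ≤ (b:ℝ)*(((k:ℝ)+1)*p) := hu'.2
        nlinarith [hv'.2, mul_le_mul_of_nonneg_right hbH hkp0,
          mul_le_mul_of_nonneg_right hbH' hdl0]
    have hcomp_meas : ∀ b, MeasurableSet
        (sumset b (block p k) + sumset (h - b) ((t + ·) '' chain L)) := by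
      intro b
      have hc1 : IsCompact (block p k) := isCompact_Icc.union isCompact_Icc
      have hc2 : IsCompact ((t + ·) '' chain L) :=
        (chain_compact L).image (continuous_const.add continuous_id)
      exact ((sumset_compact hc1 b).add (sumset_compact hc2 (h-b))).isClosed.measurableSet
    show volume (sumset h (block p k ∪ (t + ·) '' chain L)) = _
    rw [sumset_union]
    rw [measure_biUnion_finset ?hd (fun b _ => hcomp_meas b)]
    case hd =>
      intro b hb b' hb' hbb'
      simp only [Finset.coe_range, Set.mem_Iio] at hb hb'
      have hb1 : b ≤ h := by omega
      have hb'1 : b' ≤ h := by omega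
      apply Set.disjoint_left.2
      intro x hx hx'
      have h1 := hcomp_sub b hb1 hx
      have h2 := hcomp_sub b' hb'1 hx'
      have hne : h - b ≠ h - b' := by omega
      rcases Nat.lt_or_ge (h - b) (h - b') with hlt | hge
      · have : ((h - b : ℕ):ℝ) + 1 ≤ ((h - b' : ℕ):ℝ) := by exact_mod_cast hlt
        nlinarith [h1.2, h2.1]
      · have hlt' : h - b' < h - b := by omega
        have : ((h - b' : ℕ):ℝ) + 1 ≤ ((h - b : ℕ):ℝ) := by exact_mod_cast hlt'
        nlinarith [h2.2, h1.1]
    -- now compute each component's volume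
    have hvol : ∀ b, 1 ≤ b → b ≤ h →
        volume (sumset b (block p k) + sumset (h - b) ((t + ·) '' chain L))
          = ENNReal.ofReal (p * ((b:ℝ) * (((min b k : ℕ):ℝ) + 1)) +
              (if b < k then (b:ℝ)+1 else 1) * ((h - b : ℕ):ℝ) * dl L) := by
      intro b hb1 hbh
      have hb0 : (0:ℝ) < (b:ℝ) := by exact_mod_cast hb1
      have hbp : dl L ≤ (b:ℝ)*p := by
        nlinarith [mul_le_mul_of_nonneg_right (show (1:ℝ) ≤ (b:ℝ) by exact_mod_cast hb1) hp.le,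
          mul_nonneg hH hdl0]
      have hsm := chain_smear L hg (h - b) (by omega) ((b:ℝ)*p) hbp
      rw [sumset_image_add, add_image_right, volume_image_add]
      rw [block_sumset hp, biUnion_add]
      have hstep : ∀ s : ℕ, s ∈ Finset.range (b+1) →
          Icc ((s:ℝ)*((k:ℝ)*p)) ((s:ℝ)*((k:ℝ)*p) + (b:ℝ)*p) + sumset (h - b) (chain L)
            = Icc ((s:ℝ)*((k:ℝ)*p)) ((s:ℝ)*((k:ℝ)*p) + ((b:ℝ)*p + ((h-b:ℕ):ℝ)*dl L)) := by
        intro s _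
        rw [Icc_add_eq_image, hsm, Set.image_const_add_Icc, add_zero]
      rw [Set.iUnion_congr fun s => Set.iUnion_congr fun hs => hstep s hs]
      have hW0 : (0:ℝ) ≤ (b:ℝ)*p + ((h-b:ℕ):ℝ)*dl L := by
        have := mul_nonneg (Nat.cast_nonneg (h-b) : (0:ℝ) ≤ ((h-b:ℕ):ℝ)) hdl0
        nlinarith
      by_cases hbk : b < k
      · -- disjoint case
        have hbk' : (b:ℝ) + 1 ≤ (k:ℝ) := by exact_mod_cast hbk
        have hHdl : (H:ℝ)*dl L < p := by
          rcases eq_or_lt_of_le hdl0 with hdl | hdl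
          · rw [← hdl]; simpa using hp
          · nlinarith
        have hg0 : (b:ℝ)*p + ((h-b:ℕ):ℝ)*dl L < (k:ℝ)*p := by
          have hhb : ((h - b : ℕ):ℝ) ≤ (H:ℝ) := by
            have : h - b ≤ H := by omega
            exact_mod_cast this
          have h5 := mul_le_mul_of_nonneg_right hhb hdl0
          have h6 := mul_le_mul_of_nonneg_right hbk' hp.le
          linarith
        rw [vol_union_Icc_disjoint hW0 hg0 b]
        have hmin : min b k = b := by omega
        rw [hmin, if_pos hbk]
        congr 1
        ring
      · -- merged case
        push_neg at hbk
        have hbk' : (k:ℝ) ≤ (b:ℝ) := by exact_mod_cast hbk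
        rw [union_Icc_merge (by positivity) (by
          have h6 := mul_le_mul_of_nonneg_right hbk' hp.le
          have h7 := mul_nonneg (Nat.cast_nonneg (h-b) : (0:ℝ) ≤ ((h-b:ℕ):ℝ)) hdl0
          linarith) b, Real.volume_Icc]
        have hmin : min b k = k := by omega
        rw [hmin, if_neg (by omega)]
        congr 1
        ring
    -- assemble the sum
    rw [range_succ_eq_insert_Icc h, Finset.sum_insert (by simp)]
    have hzero : sumset 0 (block p k) + sumset (h - 0) ((t + ·) '' chain L)
        = ((h:ℝ)*t + ·) '' sumset h (chain L) := by
      rw [sumset_zero, zero_add_set, Nat.sub_zero, sumset_image_add]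
    rw [hzero, volume_image_add, ih hg h hh]
    have hterm_nonneg : ∀ b ∈ Finset.Icc 1 h, (0:ℝ) ≤ p * ((b:ℝ) * (((min b k : ℕ):ℝ) + 1)) +
        (if b < k then (b:ℝ)+1 else 1) * ((h - b : ℕ):ℝ) * dl L := by
      intro b _
      have hb0 : (0:ℝ) ≤ (b:ℝ) := Nat.cast_nonneg _
      have hm0 : (0:ℝ) ≤ ((min b k : ℕ):ℝ) := Nat.cast_nonneg _
      have hhb : (0:ℝ) ≤ ((h - b : ℕ):ℝ) := Nat.cast_nonneg _
      have hif : (0:ℝ) ≤ (if b < k then (b:ℝ)+1 else 1) := by split <;> linarith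
      nlinarith [mul_nonneg (mul_nonneg hif hhb) hdl0,
        mul_nonneg hp.le (mul_nonneg hb0 (by linarith : (0:ℝ) ≤ ((min b k : ℕ):ℝ) + 1))]
    have hsum : (∑ b ∈ Finset.Icc 1 h,
        volume (sumset b (block p k) + sumset (h - b) ((t + ·) '' chain L)))
        = ∑ b ∈ Finset.Icc 1 h, ENNReal.ofReal (p * ((b:ℝ) * (((min b k : ℕ):ℝ) + 1)) +
            (if b < k then (b:ℝ)+1 else 1) * ((h - b : ℕ):ℝ) * dl L) := by
      refine Finset.sum_congr rfl (fun b hb => ?_)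
      have hb' := Finset.mem_Icc.1 hb
      exact hvol b hb'.1 hb'.2
    rw [hsum, ← ENNReal.ofReal_sum_of_nonneg hterm_nonneg,
      ← ENNReal.ofReal_add (vform_nonneg hg h) (Finset.sum_nonneg hterm_nonneg)]
    rw [show vform ((p,k,t)::L) h = (∑ b ∈ Finset.Icc 1 h,
      (p * ((b:ℝ) * (((min b k : ℕ):ℝ) + 1)) +
        (if b < k then (b:ℝ)+1 else 1) * ((h - b : ℕ):ℝ) * dl L)) + vform L h from rfl]
    rw [add_comm]

noncomputable def yy (H : ℕ) (τ : ℕ → ℝ) : ℕ → ℝ := fun j =>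
  if j = 0 then 0 else if j ≤ H then (τ j - τ (j-1))/j else (τ H - τ (H-1))/H

noncomputable def xx (H : ℕ) (τ : ℕ → ℝ) : ℕ → ℝ := fun r =>
  if r = 0 then -(yy H τ 1)/2 else 2*(yy H τ r) - yy H τ (r+1) - yy H τ (r-1)

def KK : ℕ → ℕ := fun r => if r = 0 then 1 else r

noncomputable def FF (k : ℕ) (h : ℕ) : ℝ :=
  ∑ b ∈ Finset.Icc 1 h, (b:ℝ)*(((min b k : ℕ):ℝ)+1)

lemma telescope_Icc (f : ℕ → ℝ) : ∀ b, ∑ s ∈ Finset.Icc 1 b, (f s - f (s-1)) = f b - f 0 := by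
  intro b
  induction b with
  | zero => simp
  | succ b ih =>
    rw [Finset.sum_Icc_succ_top (by omega), ih]
    have : b + 1 - 1 = b := rfl
    rw [this]
    ring

lemma tailsum {H : ℕ} (hH : 1 ≤ H) (τ : ℕ → ℝ) :
    ∀ d r, 1 ≤ r → r + d = H → ∑ j ∈ Finset.Icc r H, xx H τ j = yy H τ r - yy H τ (r-1) := by
  intro d
  induction d with
  | zero =>
    intro r h1 h2
    have heq : r = H := by omega
    rw [show Finset.Icc r H = {r} by rw [heq, Finset.Icc_self], Finset.sum_singleton]
    have hy : yy H τ (r+1) = yy H τ r := by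
      simp only [yy]
      rw [if_neg (by omega : ¬ r + 1 = 0), if_neg (by omega : ¬ r + 1 ≤ H),
        if_neg (by omega : ¬ r = 0), if_pos (by omega : r ≤ H)]
      rw [heq]
    simp only [xx, if_neg (by omega : ¬ r = 0)]
    rw [hy]
    ring
  | succ d ih =>
    intro r h1 h2
    have hrH : r < H := by omega
    have hsplit : Finset.Icc r H = insert r (Finset.Icc (r+1) H) := by
      ext a
      simp only [Finset.mem_Icc, Finset.mem_insert]
      omega
    rw [hsplit, Finset.sum_insert (by simp), ih (r+1) (by omega) (by omega)]
    simp only [xx, if_neg (by omega : ¬ r = 0)]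
    have : r + 1 - 1 = r := by omega
    rw [this]
    ring

lemma minsum {H : ℕ} (hH : 1 ≤ H) (τ : ℕ → ℝ) :
    ∀ b, 1 ≤ b → b ≤ H →
      ∑ r ∈ Finset.Icc 1 H, xx H τ r * ((min b r : ℕ):ℝ) = yy H τ b := by
  intro b hb1 hbH
  have hmin : ∀ r, ((min b r : ℕ):ℝ) = ∑ s ∈ Finset.Icc 1 b, (if s ≤ r then (1:ℝ) else 0) := by
    intro r
    have hfil : Finset.filter (fun s => s ≤ r) (Finset.Icc 1 b) = Finset.Icc 1 (min b r) := by
      ext a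
      simp only [Finset.mem_filter, Finset.mem_Icc]
      omega
    rw [← Finset.sum_filter, hfil, Finset.sum_const, Nat.card_Icc]
    simp
  calc ∑ r ∈ Finset.Icc 1 H, xx H τ r * ((min b r : ℕ):ℝ)
      = ∑ r ∈ Finset.Icc 1 H, ∑ s ∈ Finset.Icc 1 b, (if s ≤ r then xx H τ r else 0) := by
        refine Finset.sum_congr rfl fun r _ => ?_
        rw [hmin r, Finset.mul_sum]
        refine Finset.sum_congr rfl fun s _ => ?_
        split <;> simp
    _ = ∑ s ∈ Finset.Icc 1 b, ∑ r ∈ Finset.Icc 1 H, (if s ≤ r then xx H τ r else 0) :=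
        Finset.sum_comm
    _ = ∑ s ∈ Finset.Icc 1 b, (yy H τ s - yy H τ (s-1)) := by
        refine Finset.sum_congr rfl fun s hs => ?_
        have hs' := Finset.mem_Icc.1 hs
        have hsub : Finset.Icc s H ⊆ Finset.Icc 1 H := by
          intro a ha
          simp only [Finset.mem_Icc] at ha ⊢
          omega
        rw [← Finset.sum_subset hsub (fun a ha ha' => by
          simp only [Finset.mem_Icc] at ha ha'
          rw [if_neg (by omega)])]
        rw [Finset.sum_congr rfl (fun a ha => by
          simp only [Finset.mem_Icc] at ha
          rw [if_pos (by omega)])]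
        exact tailsum hH τ (H - s) s hs'.1 (by omega)
    _ = yy H τ b - yy H τ 0 := telescope_Icc _ b
    _ = yy H τ b := by simp [yy]

lemma solver {H : ℕ} (hH : 1 ≤ H) (τ : ℕ → ℝ) (hτ0 : τ 0 = 0) :
    ∀ h, 1 ≤ h → h ≤ H →
      ∑ r ∈ Finset.range (H+1), xx H τ r * FF (KK r) h = τ h := by
  intro h h1 hh
  have hins : Finset.range (H+1) = insert 0 (Finset.Icc 1 H) := by
    ext a
    simp only [Finset.mem_range, Finset.mem_insert, Finset.mem_Icc]
    omega
  rw [hins, Finset.sum_insert (by simp)]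
  -- FF (KK 0) h = 2 * S h
  have hS : FF (KK 0) h = 2 * ∑ b ∈ Finset.Icc 1 h, (b:ℝ) := by
    rw [show KK 0 = 1 from rfl, FF, Finset.mul_sum]
    refine Finset.sum_congr rfl fun b hb => ?_
    have hb' := (Finset.mem_Icc.1 hb).1
    rw [show min b 1 = 1 by omega]
    push_cast
    ring
  have hsplit : ∀ r, 1 ≤ r → FF r h
      = (∑ b ∈ Finset.Icc 1 h, (b:ℝ) * ((min b r : ℕ):ℝ)) + ∑ b ∈ Finset.Icc 1 h, (b:ℝ) := by
    intro r _
    rw [FF, ← Finset.sum_add_distrib]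
    refine Finset.sum_congr rfl fun b hb => ?_
    ring
  have hmain : ∑ r ∈ Finset.Icc 1 H, xx H τ r * FF (KK r) h
      = (∑ r ∈ Finset.Icc 1 H, xx H τ r * ∑ b ∈ Finset.Icc 1 h, (b:ℝ) * ((min b r : ℕ):ℝ))
        + (∑ r ∈ Finset.Icc 1 H, xx H τ r) * ∑ b ∈ Finset.Icc 1 h, (b:ℝ) := by
    rw [Finset.sum_mul, ← Finset.sum_add_distrib]
    refine Finset.sum_congr rfl fun r hr => ?_
    have hr' := (Finset.mem_Icc.1 hr).1
    have hKK : KK r = r := by simp [KK]; omega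
    rw [hKK, hsplit r hr']
    ring
  rw [hmain]
  have htail := tailsum hH τ (H - 1) 1 le_rfl (by omega)
  rw [show (1:ℕ) - 1 = 0 from rfl] at htail
  have hy0 : yy H τ 0 = 0 := by simp [yy]
  rw [hy0, sub_zero] at htail
  rw [htail]
  have hinner : ∑ r ∈ Finset.Icc 1 H, xx H τ r * ∑ b ∈ Finset.Icc 1 h, (b:ℝ) * ((min b r : ℕ):ℝ)
      = ∑ b ∈ Finset.Icc 1 h, (b:ℝ) * yy H τ b := by
    calc ∑ r ∈ Finset.Icc 1 H, xx H τ r * ∑ b ∈ Finset.Icc 1 h, (b:ℝ) * ((min b r : ℕ):ℝ)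
        = ∑ r ∈ Finset.Icc 1 H, ∑ b ∈ Finset.Icc 1 h, (b:ℝ) * (xx H τ r * ((min b r : ℕ):ℝ)) := by
          refine Finset.sum_congr rfl fun r _ => ?_
          rw [Finset.mul_sum]
          refine Finset.sum_congr rfl fun b _ => ?_
          ring
      _ = ∑ b ∈ Finset.Icc 1 h, ∑ r ∈ Finset.Icc 1 H, (b:ℝ) * (xx H τ r * ((min b r : ℕ):ℝ)) :=
          Finset.sum_comm
      _ = ∑ b ∈ Finset.Icc 1 h, (b:ℝ) * yy H τ b := by
          refine Finset.sum_congr rfl fun b hb => ?_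
          have hb' := Finset.mem_Icc.1 hb
          rw [← Finset.mul_sum, minsum hH τ b hb'.1 (by omega)]
  rw [hinner]
  have hby : ∀ b, 1 ≤ b → b ≤ H → (b:ℝ) * yy H τ b = τ b - τ (b-1) := by
    intro b hb1 hbH
    simp only [yy, if_neg (by omega : ¬ b = 0), if_pos hbH]
    have hbne : b ≠ 0 := by omega
    have hb0 : (b:ℝ) ≠ 0 := by exact_mod_cast hbne
    field_simp
  rw [Finset.sum_congr rfl (fun b hb => by
    have hb' := Finset.mem_Icc.1 hb
    exact hby b hb'.1 (le_trans hb'.2 hh))]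
  rw [telescope_Icc τ h, hτ0, sub_zero, hS]
  simp only [xx, if_pos rfl, if_true]
  ring

noncomputable def QQ (H : ℕ) : ℝ := 8*((H:ℝ)+2)^3
noncomputable def TT (H : ℕ) (c : ℝ) (D : ℝ) (r : ℕ) : ℝ :=
  ((H:ℝ)+1)*((((KK r):ℝ)+1)*(2*c*(QQ H)^r + c) + D)
noncomputable def DD (H : ℕ) (c : ℝ) : ℕ → ℝ
  | 0 => 0
  | r+1 => TT H c (DD H c r) r + DD H c r
noncomputable def mkl (H : ℕ) (c : ℝ) (x : ℕ → ℝ) (θ : ℝ) : ℕ → List (ℝ × ℕ × ℝ)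
  | 0 => []
  | r+1 => (2*c*(QQ H)^r + θ * x r, KK r, TT H c (DD H c r) r) :: mkl H c x θ r

lemma QQ_ge_one (H : ℕ) : 1 ≤ QQ H := by
  have h0 : (0:ℝ) ≤ (H:ℝ) := Nat.cast_nonneg H
  have h1 : (1:ℝ) ≤ (H:ℝ)+2 := by linarith
  have h3 : (1:ℝ) ≤ ((H:ℝ)+2)^3 := one_le_pow₀ h1
  simp only [QQ]
  linarith

lemma QQ_pow_ge_one (H r : ℕ) : 1 ≤ (QQ H)^r := one_le_pow₀ (QQ_ge_one H)

lemma dl_mkl (H : ℕ) (c θ : ℝ) (x : ℕ → ℝ) : ∀ r, dl (mkl H c x θ r) = DD H c r := by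
  intro r
  induction r with
  | zero => rfl
  | succ r ih => simp only [mkl, dl, DD, ih]

lemma KK_le (H : ℕ) (hH : 1 ≤ H) : ∀ r, r ≤ H → KK r ≤ H := by
  intro r hr
  simp only [KK]
  split <;> omega

lemma KK_ge_one : ∀ r, 1 ≤ KK r := by
  intro r
  simp only [KK]
  split <;> omega

lemma DD_nonneg (H : ℕ) (c : ℝ) (hc : 0 < c) : ∀ r, 0 ≤ DD H c r := by
  intro r
  induction r with
  | zero => simp [DD]
  | succ r ih =>
    have hQ := QQ_pow_ge_one H r
    have hH : (0:ℝ) ≤ (H:ℝ) := Nat.cast_nonneg H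
    have hK : (0:ℝ) ≤ ((KK r : ℕ):ℝ) := Nat.cast_nonneg _
    simp only [DD, TT]
    have h1 : (0:ℝ) ≤ 2*c*(QQ H)^r + c := by nlinarith
    have h2 : (0:ℝ) ≤ (((KK r : ℕ):ℝ)+1)*(2*c*(QQ H)^r + c) := by nlinarith [mul_nonneg (by linarith : (0:ℝ) ≤ ((KK r:ℕ):ℝ)+1) h1]
    nlinarith [mul_nonneg (by linarith : (0:ℝ) ≤ (H:ℝ)+1)
      (by linarith : (0:ℝ) ≤ (((KK r:ℕ):ℝ)+1)*(2*c*(QQ H)^r + c) + DD H c r)]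

lemma DD_bound (H : ℕ) (c : ℝ) (hc : 0 < c) (hH : 1 ≤ H) :
    ∀ r, r ≤ H + 1 → ((H:ℝ)+1) * DD H c r ≤ c * (QQ H)^r := by
  intro r
  induction r with
  | zero =>
    intro _
    simp only [DD, pow_zero, mul_zero]
    nlinarith
  | succ r ih =>
    intro hr
    have ih' := ih (by omega)
    have hQ := QQ_pow_ge_one H r
    have hHc : (1:ℝ) ≤ (H:ℝ) := by exact_mod_cast hH
    have hKle : KK r ≤ H := KK_le H hH r (by omega)
    have hK : ((KK r : ℕ):ℝ) ≤ (H:ℝ) := by exact_mod_cast hKle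
    have hK0 : (0:ℝ) ≤ ((KK r : ℕ):ℝ) := Nat.cast_nonneg _
    have hD0 := DD_nonneg H c hc r
    have hQdef : (QQ H) = 8*((H:ℝ)+2)^3 := rfl
    have hE0 : (0:ℝ) ≤ c * (QQ H)^r := by positivity
    have hcE : c ≤ c * (QQ H)^r := by nlinarith
    have h3E : 2*c*(QQ H)^r + c ≤ 3*(c*(QQ H)^r) := by nlinarith
    have h3E0 : (0:ℝ) ≤ 2*c*(QQ H)^r + c := by nlinarith
    have hKH : (((KK r:ℕ):ℝ)+1) ≤ (H:ℝ)+1 := by linarith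
    have step1 : (((KK r:ℕ):ℝ)+1)*(2*c*(QQ H)^r + c) ≤ ((H:ℝ)+1)*(3*(c*(QQ H)^r)) := by
      calc (((KK r:ℕ):ℝ)+1)*(2*c*(QQ H)^r + c) ≤ (((KK r:ℕ):ℝ)+1)*(3*(c*(QQ H)^r)) := by
            apply mul_le_mul_of_nonneg_left h3E (by linarith)
        _ ≤ ((H:ℝ)+1)*(3*(c*(QQ H)^r)) := by
            apply mul_le_mul_of_nonneg_right hKH (by linarith)
    have hD1 : ((H:ℝ)+1) * DD H c r ≤ c * (QQ H)^r := ih'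
    have e1 : ((H:ℝ)+1)^2*((((KK r:ℕ):ℝ)+1)*(2*c*(QQ H)^r + c))
        ≤ ((H:ℝ)+1)^2*(((H:ℝ)+1)*(3*(c*(QQ H)^r))) :=
      mul_le_mul_of_nonneg_left step1 (by positivity)
    have e3 : (((H:ℝ)+1)+1)*(((H:ℝ)+1)*DD H c r) ≤ (((H:ℝ)+1)+1)*(c*(QQ H)^r) :=
      mul_le_mul_of_nonneg_left hD1 (by linarith)
    have hbig : ((H:ℝ)+1)*(((H:ℝ)+1)*((((KK r:ℕ):ℝ)+1)*(2*c*(QQ H)^r + c) + DD H c r) + DD H c r)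
        ≤ (3*((H:ℝ)+1)^3 + ((H:ℝ)+2)) * (c*(QQ H)^r) := by
      nlinarith [e1, e3]
    have hcoef : (3*((H:ℝ)+1)^3 + ((H:ℝ)+2)) ≤ QQ H := by
      simp only [QQ]
      nlinarith
    simp only [DD, TT, pow_succ]
    calc ((H:ℝ)+1)*(((H:ℝ)+1)*((((KK r:ℕ):ℝ)+1)*(2*c*(QQ H)^r + c) + DD H c r) + DD H c r)
        ≤ (3*((H:ℝ)+1)^3 + ((H:ℝ)+2)) * (c*(QQ H)^r) := hbig
      _ ≤ QQ H * (c*(QQ H)^r) := mul_le_mul_of_nonneg_right hcoef hE0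
      _ = c * ((QQ H)^r * QQ H) := by ring

lemma mkl_good (H : ℕ) (c θ : ℝ) (x : ℕ → ℝ) (hc : 0 < c) (hH : 1 ≤ H)
    (hx : ∀ r, r ≤ H → |θ * x r| ≤ c) :
    ∀ r, r ≤ H + 1 → good H (mkl H c x θ r) := by
  intro r
  induction r with
  | zero => intro _; trivial
  | succ r ih =>
    intro hr
    have hrH : r ≤ H := by omega
    have hxr := hx r hrH
    have habs := abs_le.1 hxr
    have hQ := QQ_pow_ge_one H r
    have hcQ : c ≤ c * (QQ H)^r := by nlinarith
    have hD1 := DD_bound H c hc hH r (by omega)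
    have hD0 := DD_nonneg H c hc r
    have hdl : dl (mkl H c x θ r) = DD H c r := dl_mkl H c θ x r
    refine ⟨?_, KK_ge_one r, ?_, ?_, ih (by omega)⟩
    · nlinarith [habs.1]
    · rw [hdl]
      nlinarith [habs.1]
    · rw [hdl]
      simp only [TT]
      have hP : 2*c*(QQ H)^r + θ * x r ≤ 2*c*(QQ H)^r + c := by linarith [habs.2]
      have hK0 : (0:ℝ) ≤ ((KK r:ℕ):ℝ) := Nat.cast_nonneg _
      have hH0 : (0:ℝ) ≤ (H:ℝ) := Nat.cast_nonneg _
      have := mul_le_mul_of_nonneg_left hP (by linarith : (0:ℝ) ≤ ((KK r:ℕ):ℝ)+1)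
      nlinarith

lemma vform_mkl (H : ℕ) (c θ : ℝ) (x : ℕ → ℝ) :
    ∀ r h, vform (mkl H c x θ r) h
      = (∑ r' ∈ Finset.range r, (2*c*(QQ H)^r' + θ * x r') * FF (KK r') h)
        + ∑ r' ∈ Finset.range r, ∑ b ∈ Finset.Icc 1 h,
            (if b < KK r' then (b:ℝ)+1 else 1) * ((h - b : ℕ):ℝ) * DD H c r' := by
  intro r h
  induction r with
  | zero => simp [mkl, vform]
  | succ r ih =>
    have hdl : dl (mkl H c x θ r) = DD H c r := dl_mkl H c θ x r
    show (∑ b ∈ Finset.Icc 1 h, ((2*c*(QQ H)^r + θ * x r) * ((b:ℝ) * (((min b (KK r) : ℕ):ℝ) + 1)) +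
        (if b < KK r then (b:ℝ)+1 else 1) * ((h - b : ℕ):ℝ) * dl (mkl H c x θ r))) + vform (mkl H c x θ r) h = _
    rw [hdl, ih, Finset.sum_add_distrib, Finset.sum_range_succ, Finset.sum_range_succ]
    rw [show (∑ b ∈ Finset.Icc 1 h, (2*c*(QQ H)^r + θ * x r) * ((b:ℝ) * (((min b (KK r) : ℕ):ℝ) + 1)))
      = (2*c*(QQ H)^r + θ * x r) * FF (KK r) h by rw [FF, Finset.mul_sum]]
    ring



/-- For all integers `n ≥ 2` and `H ≥ 2`, for any integers `m i h` given for all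
`i = 1,…,n−1` and `h = 1,…,H`, and for every real number `θ > 0`, there exist
Lebesgue-measurable sets of real numbers `A 1, …, A n` such that all the sumsets
`hAᵢ` (for `1 ≤ h ≤ H`) are Lebesgue measurable with finite measure and
`μ(hAᵢ) − μ(hA_{i+1}) = θ * m i h` for all `i = 1,…,n−1` and `h = 1,…,H`. -/
theorem measure_differences_real (n H : ℕ) (hn : 2 ≤ n) (hH : 2 ≤ H)
    (m : ℕ → ℕ → ℤ) (θ : ℝ) (hθ : 0 < θ) :
    ∃ A : ℕ → Set ℝ,
      (∀ i, 1 ≤ i → i ≤ n → MeasurableSet (A i)) ∧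
      (∀ i, 1 ≤ i → i ≤ n → ∀ h, 1 ≤ h → h ≤ H →
        MeasurableSet (sumset h (A i)) ∧ volume (sumset h (A i)) < ⊤) ∧
      (∀ i, 1 ≤ i → i ≤ n - 1 → ∀ h, 1 ≤ h → h ≤ H →
        (volume (sumset h (A i))).toReal - (volume (sumset h (A (i + 1)))).toReal
          = θ * m i h) := by
  have hH1 : 1 ≤ H := by omega
  set tau : ℕ → ℕ → ℝ :=
    fun i h => if h = 0 then 0 else ∑ i' ∈ Finset.Ico i n, (m i' h : ℝ) with htau
  set xf : ℕ → ℕ → ℝ := fun i => xx H (tau i) with hxf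
  set X : ℝ := 1 + ∑ i ∈ Finset.range (n+1), ∑ r ∈ Finset.range (H+1), |xf i r| with hXdef
  have habs_nonneg : ∀ i ∈ Finset.range (n+1), (0:ℝ) ≤ ∑ r ∈ Finset.range (H+1), |xf i r| :=
    fun i _ => Finset.sum_nonneg fun r _ => abs_nonneg _
  have hX1 : 1 ≤ X := by
    have := Finset.sum_nonneg habs_nonneg
    simp only [hXdef]
    linarith
  have hxb : ∀ i, i ≤ n → ∀ r, r ≤ H → |xf i r| ≤ X - 1 := by
    intro i hi r hr
    have h1 : |xf i r| ≤ ∑ r' ∈ Finset.range (H+1), |xf i r'| :=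
      Finset.single_le_sum (f := fun r' => |xf i r'|) (fun r' _ => abs_nonneg _)
        (Finset.mem_range.2 (show r < H+1 by omega))
    have h2 : (∑ r' ∈ Finset.range (H+1), |xf i r'|)
        ≤ ∑ i' ∈ Finset.range (n+1), ∑ r' ∈ Finset.range (H+1), |xf i' r'| :=
      Finset.single_le_sum (f := fun i' => ∑ r' ∈ Finset.range (H+1), |xf i' r'|)
        (fun i' hi' => Finset.sum_nonneg fun r' _ => abs_nonneg _)
        (Finset.mem_range.2 (show i < n+1 by omega))
    simp only [hXdef]
    linarith
  set c : ℝ := θ * X with hcdef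
  have hc : 0 < c := by simp only [hcdef]; nlinarith
  have hgood : ∀ i, i ≤ n → good H (mkl H c (xf i) θ (H+1)) := by
    intro i hi
    refine mkl_good H c θ (xf i) hc hH1 ?_ (H+1) le_rfl
    intro r hr
    rw [abs_mul, abs_of_pos hθ]
    have := hxb i hi r hr
    simp only [hcdef]
    nlinarith
  refine ⟨fun i => chain (mkl H c (xf i) θ (H+1)), ?_, ?_, ?_⟩
  · intro i _ _
    exact (chain_compact _).isClosed.measurableSet
  · intro i hi1 hin h h1 hh
    refine ⟨(sumset_compact (chain_compact _) h).isClosed.measurableSet, ?_⟩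
    rw [chain_volume _ (hgood i hin) h hh]
    exact ENNReal.ofReal_lt_top
  · intro i hi1 hin h h1 hh
    have hin' : i ≤ n := by omega
    have hin2 : i + 1 ≤ n := by omega
    have hiltn : i < n := by omega
    rw [chain_volume _ (hgood i hin') h hh, chain_volume _ (hgood (i+1) hin2) h hh,
      ENNReal.toReal_ofReal (vform_nonneg (hgood i hin') h),
      ENNReal.toReal_ofReal (vform_nonneg (hgood (i+1) hin2) h),
      vform_mkl, vform_mkl]
    have hexp : ∀ x' : ℕ → ℝ,
        (∑ r ∈ Finset.range (H+1), (2*c*(QQ H)^r + θ * x' r) * FF (KK r) h)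
          = (∑ r ∈ Finset.range (H+1), 2*c*(QQ H)^r * FF (KK r) h)
            + θ * ∑ r ∈ Finset.range (H+1), x' r * FF (KK r) h := by
      intro x'
      rw [Finset.mul_sum, ← Finset.sum_add_distrib]
      refine Finset.sum_congr rfl fun r _ => ?_
      ring
    rw [hexp, hexp]
    have hsol : ∀ j, ∑ r ∈ Finset.range (H+1), xf j r * FF (KK r) h = tau j h := by
      intro j
      exact solver hH1 (tau j) (by simp [htau]) h h1 hh
    rw [hsol i, hsol (i+1)]
    have htd : tau i h - tau (i+1) h = (m i h : ℝ) := by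
      simp only [htau, if_neg (show ¬ h = 0 by omega)]
      rw [Finset.sum_eq_sum_Ico_succ_bot hiltn]
      ring
    have htd2 : θ * tau i h - θ * tau (i+1) h = θ * (m i h : ℝ) := by
      rw [← mul_sub, htd]
    linarith [htd2]
end

section
/- Let ε be a real number with 0 < ε ≤ 1/3 and let X = [0, 1−ε] ∪ [2, 3−ε] ⊆ ℝ. Then for every integer h ≥ 3, the h-fold sumset satisfies hX = [0, h(3−ε)]. -/
lemma sum_ite_lt_aux (k h : ℕ) (hk : k ≤ h) :
    ∑ i ∈ Finset.range h, (if i < k then (2:ℝ) else 0) = 2 * k := by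
  rw [← Finset.sum_range_add_sum_Ico _ hk]
  have h1 : ∑ i ∈ Finset.range k, (if i < k then (2:ℝ) else 0) = 2 * k := by
    rw [Finset.sum_congr rfl (fun i hi => if_pos (Finset.mem_range.mp hi))]
    simp [mul_comm]
  have h2 : ∑ i ∈ Finset.Ico k h, (if i < k then (2:ℝ) else 0) = 0 := by
    apply Finset.sum_eq_zero
    intro i hi
    have : k ≤ i := (Finset.mem_Ico.mp hi).1
    exact if_neg (by omega)
  rw [h1, h2, add_zero]

/-- Let `0 < ε ≤ 1/3` and `X = [0, 1−ε] ∪ [2, 3−ε] ⊆ ℝ`.  Then for every integer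
`h ≥ 3`, the `h`-fold sumset satisfies `hX = [0, h(3−ε)]`. -/
theorem sumset_of_two_intervals (ε : ℝ) (hε0 : 0 < ε) (hε : ε ≤ 1 / 3)
    (X : Set ℝ) (hX : X = Set.Icc 0 (1 - ε) ∪ Set.Icc 2 (3 - ε))
    (h : ℕ) (hh : 3 ≤ h) :
    sumset h X = Set.Icc 0 (h * (3 - ε)) := by
  have hh0 : (0:ℝ) < h := by positivity
  have hhne : (h:ℝ) ≠ 0 := ne_of_gt hh0
  have h1e : (0:ℝ) ≤ 1 - ε := by linarith
  have hbig : (2:ℝ) ≤ h * (1 - ε) := by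
    have : (3:ℝ) ≤ h := by exact_mod_cast hh
    nlinarith
  ext x
  constructor
  · rintro ⟨f, hf, rfl⟩
    have hmem : ∀ i, 0 ≤ f i ∧ f i ≤ 3 - ε := by
      intro i
      have := hf i
      rw [hX] at this
      rcases this with hm | hm <;> constructor <;>
        first
        | linarith [hm.1, hm.2]
    constructor
    · exact Finset.sum_nonneg fun i _ => (hmem i).1
    · calc ∑ i, f i ≤ ∑ _i : Fin h, (3 - ε) := Finset.sum_le_sum fun i _ => (hmem i).2
        _ = h * (3 - ε) := by simp [mul_comm]; ring
  · rintro ⟨hx0, hx1⟩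
    -- choose k = min h ⌊x/2⌋
    set k : ℕ := min h ⌊x / 2⌋₊ with hkdef
    have hkh : k ≤ h := min_le_left _ _
    have h2k : 2 * (k:ℝ) ≤ x := by
      have : (⌊x / 2⌋₊ : ℝ) ≤ x / 2 := Nat.floor_le (by positivity)
      have hk2 : (k:ℝ) ≤ ⌊x / 2⌋₊ := by exact_mod_cast min_le_right h _
      linarith
    set r : ℝ := x - 2 * k with hrdef
    have hr0 : 0 ≤ r := by linarith
    have hr1 : r ≤ h * (1 - ε) := by
      rcases le_or_gt (⌊x / 2⌋₊) h with hc | hc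
      · -- k = ⌊x/2⌋, r < 2
        have hk : k = ⌊x / 2⌋₊ := min_eq_right hc
        have : x / 2 < ⌊x / 2⌋₊ + 1 := Nat.lt_floor_add_one _
        have : x < 2 * (k:ℝ) + 2 := by rw [hk]; push_cast; linarith
        linarith
      · have hk : k = h := min_eq_left hc.le
        have : r = x - 2 * h := by rw [hrdef, hk]
        rw [this]
        nlinarith
    have hrh : 0 ≤ r / h := by positivity
    have hrh1 : r / h ≤ 1 - ε := by
      rw [div_le_iff₀ hh0]; linarith [hr1]
    refine ⟨fun i => (if (i : ℕ) < k then (2:ℝ) else 0) + r / h, ?_, ?_⟩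
    · intro i
      rw [hX]
      by_cases hi : (i : ℕ) < k
      · right
        simp only [if_pos hi]
        constructor <;> linarith
      · left
        simp only [if_neg hi]
        constructor <;> linarith
    · rw [Finset.sum_add_distrib]
      have hs1 : ∑ i : Fin h, (if (i : ℕ) < k then (2:ℝ) else 0) = 2 * k := by
        rw [Fin.sum_univ_eq_sum_range (fun i => if i < k then (2:ℝ) else 0) h]
        exact sum_ite_lt_aux k h hkh
      have hs2 : ∑ _i : Fin h, r / h = r := by
        rw [Finset.sum_const, Finset.card_univ, Fintype.card_fin, nsmul_eq_mul,
          mul_div_cancel₀ _ hhne]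
      rw [hs1, hs2, hrdef]; ring
end

section
/- Let ε be a real number with 0 < ε ≤ 1/3, let X = [0, 1−ε] ∪ [2, 3−ε] ⊆ ℝ, and let Y be a nonempty subset of the interval [1+ε, 2−2ε]. Then the 2-fold sumset satisfies 2(X ∪ Y) = [0, 2(3−ε)]. -/
/-- Let `0 < ε ≤ 1/3`, let `X = [0, 1−ε] ∪ [2, 3−ε] ⊆ ℝ`, and let `Y` be a nonempty
subset of `[1+ε, 2−2ε]`.  Then the 2-fold sumset satisfies
`2(X ∪ Y) = [0, 2(3−ε)]`. -/
theorem two_fold_sumset (ε : ℝ) (hε0 : 0 < ε) (hε : ε ≤ 1 / 3)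
    (X : Set ℝ) (hX : X = Set.Icc 0 (1 - ε) ∪ Set.Icc 2 (3 - ε))
    (Y : Set ℝ) (hY : Y ⊆ Set.Icc (1 + ε) (2 - 2 * ε)) (hYne : Y.Nonempty) :
    sumset 2 (X ∪ Y) = Set.Icc 0 (2 * (3 - ε)) := by
  obtain ⟨y, hy⟩ := hYne
  have hy' := hY hy
  have hmem : ∀ a b : ℝ, a ∈ X ∪ Y → b ∈ X ∪ Y → a + b ∈ sumset 2 (X ∪ Y) := by
    intro a b ha hb
    exact ⟨![a, b], by intro i; fin_cases i <;> simpa, by simp [Fin.sum_univ_two]⟩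
  ext t
  constructor
  · rintro ⟨f, hf, rfl⟩
    have hb : ∀ i, f i ∈ Set.Icc (0:ℝ) (3 - ε) := by
      intro i
      rcases hf i with h | h
      · rw [hX] at h
        rcases h with h | h
        · exact ⟨h.1, h.2.trans (by linarith)⟩
        · exact ⟨by linarith [h.1], h.2⟩
      · have := hY h; exact ⟨by linarith [this.1], by linarith [this.2]⟩
    rw [Fin.sum_univ_two]
    have h0 := hb 0; have h1 := hb 1
    exact ⟨by linarith [h0.1, h1.1], by linarith [h0.2, h1.2]⟩
  · rintro ⟨ht0, ht1⟩
    have hxl : ∀ z, z ∈ Set.Icc (0:ℝ) (1 - ε) → z ∈ X ∪ Y := fun z hz =>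
      Or.inl (hX ▸ Or.inl hz)
    have hxr : ∀ z, z ∈ Set.Icc (2:ℝ) (3 - ε) → z ∈ X ∪ Y := fun z hz =>
      Or.inl (hX ▸ Or.inr hz)
    have hyy : y ∈ X ∪ Y := Or.inr hy
    rcases le_or_gt t (2 - 2 * ε) with h | h
    · have heq : t = t / 2 + t / 2 := by ring
      rw [heq]
      exact hmem _ _ (hxl _ ⟨by linarith, by linarith⟩) (hxl _ ⟨by linarith, by linarith⟩)
    · rcases le_or_gt t 2 with h2 | h2
      · have heq : t = y + (t - y) := by ring
        rw [heq]
        exact hmem _ _ hyy (hxl _ ⟨by linarith [hy'.2], by linarith [hy'.1]⟩)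
      · rcases le_or_gt t (3 - ε) with h3 | h3
        · have heq : t = 2 + (t - 2) := by ring
          rw [heq]
          exact hmem _ _ (hxr _ ⟨le_refl _, by linarith⟩) (hxl _ ⟨by linarith, by linarith⟩)
        · rcases le_or_gt t (4 - 2 * ε) with h4 | h4
          · have heq : t = (3 - ε) + (t - (3 - ε)) := by ring
            rw [heq]
            exact hmem _ _ (hxr _ ⟨by linarith, le_refl _⟩) (hxl _ ⟨by linarith, by linarith⟩)
          · rcases le_or_gt t 4 with h5 | h5
            · have heq : t = y + (t - y) := by ring
              rw [heq]
              exact hmem _ _ hyy (hxr _ ⟨by linarith [hy'.2], by linarith [hy'.1]⟩)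
            · have heq : t = t / 2 + t / 2 := by ring
              rw [heq]
              exact hmem _ _ (hxr _ ⟨by linarith, by linarith⟩) (hxr _ ⟨by linarith, by linarith⟩)
end
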